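/- arXiv:2105.10446 — 5 statements merged into one kernel-verified Lean document; each statement's English description precedes it below -/
import Mathlib

section
/- The function Z ↦ log det(Z) is strictly concave on the set of symmetric positive definite n×n real matrices: for any β ∈ (0,1) and positive definite Z₁, Z₂, log det((1-β)Z₁ + βZ₂) ≥ (1-β) log det Z₁ + β log det Z₂, with equality if and only if Z₁ = Z₂. -/
open Matrix Finset
open scoped MatrixOrder

private lemma log_combo_lt {β μ : ℝ} (h0 : 0 < β) (h1 : β < 1) (hμ : 0 < μ) (hne : μ ≠ 1) :
    β * Real.log μ < Real.log ((1 - β) + β * μ) := by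
  have := strictConcaveOn_log_Ioi.2 (Set.mem_Ioi.mpr one_pos) (Set.mem_Ioi.mpr hμ)
    (Ne.symm hne) (by linarith : (0:ℝ) < 1 - β) h0 (by ring)
  simpa using this

private lemma log_combo_le {β μ : ℝ} (h0 : 0 < β) (h1 : β < 1) (hμ : 0 < μ) :
    β * Real.log μ ≤ Real.log ((1 - β) + β * μ) := by
  rcases eq_or_ne μ 1 with rfl | hne
  · simp
  · exact (log_combo_lt h0 h1 hμ hne).le

private lemma key_combo {n : ℕ} {M : Matrix (Fin n) (Fin n) ℝ} (hM : M.PosDef) {β : ℝ}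
    (h0 : 0 < β) (h1 : β < 1) :
    0 < ((1 - β) • (1 : Matrix (Fin n) (Fin n) ℝ) + β • M).det ∧
    β * Real.log M.det ≤ Real.log ((1 - β) • (1 : Matrix (Fin n) (Fin n) ℝ) + β • M).det ∧
    (Real.log ((1 - β) • (1 : Matrix (Fin n) (Fin n) ℝ) + β • M).det = β * Real.log M.det
      ↔ M = 1) := by
  have hH := hM.isHermitian
  set U : Matrix (Fin n) (Fin n) ℝ := (hH.eigenvectorUnitary : Matrix (Fin n) (Fin n) ℝ) with hU
  set μ := hH.eigenvalues with hμdef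
  have hμpos : ∀ i, 0 < μ i := hM.eigenvalues_pos
  have hUU : U * star U = 1 := (Matrix.mem_unitaryGroup_iff).mp hH.eigenvectorUnitary.2
  have hspec : M = U * diagonal μ * star U := by
    have := hH.spectral_theorem
    simpa [RCLike.ofReal_real_eq_id] using this
  have hcombo : (1 - β) • (1 : Matrix (Fin n) (Fin n) ℝ) + β • M
      = U * diagonal (fun i => (1 - β) + β * μ i) * star U := by
    have hd : diagonal (fun i => (1 - β) + β * μ i)
        = (1 - β) • (1 : Matrix (Fin n) (Fin n) ℝ) + β • diagonal μ := by
      ext i j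
      rcases eq_or_ne i j with rfl | hij
      · simp [Matrix.diagonal_apply_eq, Matrix.one_apply_eq]
      · simp [Matrix.diagonal_apply_ne _ hij, Matrix.one_apply_ne hij]
    rw [hd, Matrix.mul_add, Matrix.add_mul, mul_smul_comm, mul_smul_comm, smul_mul_assoc,
      smul_mul_assoc, Matrix.mul_one, hUU, ← hspec]
  have hdetconj : ∀ X : Matrix (Fin n) (Fin n) ℝ, (U * X * star U).det = X.det := by
    intro X
    have h1' : U.det * (star U).det = 1 := by rw [← det_mul, hUU, det_one]
    rw [det_mul, det_mul]
    linear_combination X.det * h1'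
  have hdetM : M.det = ∏ i, μ i := by
    have := hH.det_eq_prod_eigenvalues
    simpa using this
  have hdetC : ((1 - β) • (1 : Matrix (Fin n) (Fin n) ℝ) + β • M).det
      = ∏ i, ((1 - β) + β * μ i) := by
    rw [hcombo, hdetconj, det_diagonal]
  have hcpos : ∀ i, 0 < (1 - β) + β * μ i := fun i => by nlinarith [hμpos i]
  have hlogC : Real.log ((1 - β) • (1 : Matrix (Fin n) (Fin n) ℝ) + β • M).det
      = ∑ i, Real.log ((1 - β) + β * μ i) := by
    rw [hdetC, Real.log_prod (fun i _ => (hcpos i).ne')]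
  have hlogM : β * Real.log M.det = ∑ i, β * Real.log (μ i) := by
    rw [hdetM, Real.log_prod (fun i _ => (hμpos i).ne'), Finset.mul_sum]
  have hle : ∀ i ∈ Finset.univ, β * Real.log (μ i) ≤ Real.log ((1 - β) + β * μ i) :=
    fun i _ => log_combo_le h0 h1 (hμpos i)
  refine ⟨?_, ?_, ?_⟩
  · rw [hdetC]
    exact Finset.prod_pos fun i _ => hcpos i
  · rw [hlogC, hlogM]
    exact Finset.sum_le_sum hle
  · constructor
    · intro heq
      by_contra hMne
      have : ∃ i, μ i ≠ 1 := by
        by_contra hall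
        push_neg at hall
        apply hMne
        have : diagonal μ = 1 := by
          rw [funext hall]
          exact Matrix.diagonal_one
        rw [hspec, this, Matrix.mul_one, hUU]
      obtain ⟨i, hi⟩ := this
      have hstrict : ∑ j, β * Real.log (μ j) < ∑ j, Real.log ((1 - β) + β * μ j) :=
        Finset.sum_lt_sum hle ⟨i, Finset.mem_univ i, log_combo_lt h0 h1 (hμpos i) hi⟩
      rw [hlogC, hlogM] at heq
      linarith
    · rintro rfl
      have : (1 - β) • (1 : Matrix (Fin n) (Fin n) ℝ) + β • (1 : Matrix (Fin n) (Fin n) ℝ)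
          = 1 := by
        rw [← add_smul]; norm_num
      rw [this]
      simp

private lemma posDef_conj {n : ℕ} {A B : Matrix (Fin n) (Fin n) ℝ} (hA : A.PosDef)
    (hB : IsUnit B.det) : (Bᴴ * A * B).PosDef := by
  refine Matrix.PosDef.of_dotProduct_mulVec_pos (Matrix.isHermitian_conjTranspose_mul_mul B hA.1) fun x hx => ?_
  have hBx : B *ᵥ x ≠ 0 := by
    intro h
    apply hx
    have hinj : Function.Injective B.mulVec :=
      Matrix.mulVec_injective_iff_isUnit.mpr ((Matrix.isUnit_iff_isUnit_det B).mpr hB)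
    apply hinj
    simpa using h
  simpa only [star_mulVec, dotProduct_mulVec, vecMul_vecMul] using hA.dotProduct_mulVec_pos hBx

theorem logdet_strictly_concave {n : ℕ} (Z₁ Z₂ : Matrix (Fin n) (Fin n) ℝ)
    (h₁ : Z₁.PosDef) (h₂ : Z₂.PosDef) (β : ℝ) (hβ : β ∈ Set.Ioo (0 : ℝ) 1) :
    Real.log ((1 - β) • Z₁ + β • Z₂).det ≥
      (1 - β) * Real.log Z₁.det + β * Real.log Z₂.det ∧
    (Real.log ((1 - β) • Z₁ + β • Z₂).det =
      (1 - β) * Real.log Z₁.det + β * Real.log Z₂.det ↔ Z₁ = Z₂) := by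
  obtain ⟨hβ0, hβ1⟩ := hβ
  have hs := h₁.posSemidef
  set A := CFC.sqrt Z₁ with hAdef
  have hAps : A.PosSemidef := Matrix.nonneg_iff_posSemidef.mp (CFC.sqrt_nonneg Z₁)
  have hAH : A.IsHermitian := hAps.1
  have hAA : A * A = Z₁ := CFC.sqrt_mul_sqrt_self Z₁ hs.nonneg
  have hAdet : A.det ≠ 0 := by
    intro h
    have : Z₁.det = 0 := by rw [← hAA, det_mul, h, zero_mul]
    exact h₁.det_pos.ne' this
  have hAu : IsUnit A.det := hAdet.isUnit
  have hAinvH : A⁻¹.IsHermitian := hAH.inv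
  have hAinvdet : IsUnit A⁻¹.det := Matrix.isUnit_nonsing_inv_det A hAu
  set M := A⁻¹ * Z₂ * A⁻¹ with hMdef
  have hMposdef : M.PosDef := by
    have h := posDef_conj h₂ hAinvdet
    rwa [hAinvH.eq] at h
  have hAAinv : A * A⁻¹ = 1 := Matrix.mul_nonsing_inv A hAu
  have hAinvA : A⁻¹ * A = 1 := Matrix.nonsing_inv_mul A hAu
  have hZ₂ : A * M * A = Z₂ := by
    rw [hMdef, show A * (A⁻¹ * Z₂ * A⁻¹) * A = (A * A⁻¹) * Z₂ * (A⁻¹ * A) by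
      noncomm_ring, hAAinv, hAinvA, Matrix.one_mul, Matrix.mul_one]
  have hcombo : (1 - β) • Z₁ + β • Z₂
      = A * ((1 - β) • (1 : Matrix (Fin n) (Fin n) ℝ) + β • M) * A := by
    rw [Matrix.mul_add, Matrix.add_mul, mul_smul_comm, mul_smul_comm, Matrix.mul_one,
      smul_mul_assoc, smul_mul_assoc, hAA, hZ₂]
  obtain ⟨hCpos, hCle, hCiff⟩ := key_combo hMposdef hβ0 hβ1
  have hMdet0 : M.det ≠ 0 := hMposdef.det_pos.ne'
  have hlogZ₁ : Real.log Z₁.det = 2 * Real.log A.det := by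
    rw [← hAA, det_mul, Real.log_mul hAdet hAdet]; ring
  have hlogZ₂ : Real.log Z₂.det = 2 * Real.log A.det + Real.log M.det := by
    rw [← hZ₂, det_mul, det_mul, Real.log_mul (mul_ne_zero hAdet hMdet0) hAdet,
      Real.log_mul hAdet hMdet0]
    ring
  have hlogLHS : Real.log ((1 - β) • Z₁ + β • Z₂).det
      = 2 * Real.log A.det
        + Real.log ((1 - β) • (1 : Matrix (Fin n) (Fin n) ℝ) + β • M).det := by
    rw [hcombo, det_mul, det_mul, Real.log_mul (mul_ne_zero hAdet hCpos.ne') hAdet,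
      Real.log_mul hAdet hCpos.ne']
    ring
  have hM1Z : M = 1 ↔ Z₁ = Z₂ := by
    constructor
    · intro h
      rw [← hZ₂, h, Matrix.mul_one, hAA]
    · intro h
      rw [hMdef, ← h, ← hAA, show A⁻¹ * (A * A) * A⁻¹ = (A⁻¹ * A) * (A * A⁻¹) by
        noncomm_ring, hAAinv, hAinvA, Matrix.one_mul]
  constructor
  · rw [hlogLHS, hlogZ₁, hlogZ₂]
    nlinarith [hCle]
  · rw [hlogLHS, hlogZ₁, hlogZ₂, ← hM1Z, ← hCiff]
    constructor
    · intro h; linarith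
    · intro h; rw [h]; ring
end

section
/- Lower bound on the coding rate of concatenated data: for matrices Z^j ∈ ℝ^{n×m_j}, j = 1,…,k, with Z = [Z^1, …, Z^k] ∈ ℝ^{n×m} and m = Σⱼ m_j, and any ε > 0, Σⱼ (m_j/2) log det(I + (n/(m_j ε²)) Z^j (Z^j)ᵀ) ≤ (m/2) log det(I + (n/(m ε²)) Z Zᵀ), with equality if and only if Z^1(Z^1)ᵀ/m₁ = Z^2(Z^2)ᵀ/m₂ = ⋯ = Z^k(Z^k)ᵀ/m_k. -/
open Matrix Finset

variable {N : Type*} [Fintype N] [DecidableEq N]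

lemma posSemidef_smul' {M : Matrix N N ℝ} (hM : M.PosSemidef) {a : ℝ} (ha : 0 ≤ a) :
    (a • M).PosSemidef := by
  exact hM.smul ha

lemma posDef_smul' {M : Matrix N N ℝ} (hM : M.PosDef) {a : ℝ} (ha : 0 < a) :
    (a • M).PosDef := by
  exact hM.smul ha

lemma det_smul_one_add_smul (C : Matrix N N ℝ) (hC : C.IsHermitian) (a b : ℝ) :
    (a • 1 + b • C).det = ∏ i, (a + b * hC.eigenvalues i) := by
  set V : Matrix N N ℝ := (hC.eigenvectorUnitary : Matrix N N ℝ) with hV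
  have hVV : V * star V = 1 := (Matrix.mem_unitaryGroup_iff).mp hC.eigenvectorUnitary.2
  set D : Matrix N N ℝ := diagonal (RCLike.ofReal ∘ hC.eigenvalues) with hD
  have h1 : a • (1 : Matrix N N ℝ) + b • C = V * (a • 1 + b • D) * star V := by
    rw [mul_add, add_mul, mul_smul_comm, mul_smul_comm, smul_mul_assoc, smul_mul_assoc,
      mul_one, hVV, hC.spectral_theorem, Unitary.conjStarAlgAut_apply]
  rw [h1, det_mul_right_comm, hVV, one_mul]
  have h2 : a • (1 : Matrix N N ℝ) + b • D = diagonal (fun i => a + b * hC.eigenvalues i) := by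
    rw [smul_one_eq_diagonal, hD, ← diagonal_smul, ← diagonal_add]
    congr 1
  rw [h2, det_diagonal]

open scoped MatrixOrder in
lemma logdet_two_point {A B : Matrix N N ℝ} (hA : A.PosDef) (hB : B.PosDef)
    {a b : ℝ} (ha : 0 < a) (hb : 0 < b) (hab : a + b = 1) :
    (a * Real.log A.det + b * Real.log B.det ≤ Real.log (a • A + b • B).det) ∧
    (A ≠ B → a * Real.log A.det + b * Real.log B.det < Real.log (a • A + b • B).det) := by
  classical
  set S : Matrix N N ℝ := CFC.sqrt A with hSdef
  have hS : S.PosSemidef := (CFC.sqrt_nonneg A).posSemidef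
  have hSS : S * S = A := CFC.sqrt_mul_sqrt_self A hA.posSemidef.nonneg
  have hdetA : 0 < A.det := hA.det_pos
  have hdetB : 0 < B.det := hB.det_pos
  have hdetS : S.det ≠ 0 := by
    intro h
    rw [← hSS, det_mul, h, mul_zero] at hdetA
    exact lt_irrefl _ hdetA
  have hSunit : IsUnit S.det := hdetS.isUnit
  have hSinvH : (S⁻¹)ᴴ = S⁻¹ := hS.isHermitian.inv
  set C : Matrix N N ℝ := S⁻¹ * B * S⁻¹ with hCdef
  have hCps : C.PosSemidef := by
    have := hB.posSemidef.mul_mul_conjTranspose_same S⁻¹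
    rwa [hSinvH] at this
  have hdetSinv : (S⁻¹).det = (S.det)⁻¹ := by
    rw [det_nonsing_inv, Ring.inverse_eq_inv']
  have hdetC : C.det = B.det / A.det := by
    rw [hCdef, det_mul, det_mul, hdetSinv, ← hSS, det_mul]
    field_simp
  have hdetCpos : 0 < C.det := by rw [hdetC]; positivity
  set μ : N → ℝ := hCps.isHermitian.eigenvalues with hμ
  have hdetCprod : C.det = ∏ i, μ i := by
    have := hCps.isHermitian.det_eq_prod_eigenvalues
    simpa using this
  have hμpos : ∀ i, 0 < μ i := by
    intro i
    rcases lt_or_eq_of_le (hCps.eigenvalues_nonneg i) with h | h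
    · exact h
    · exfalso
      rw [hdetCprod] at hdetCpos
      have : ∏ i, μ i = 0 := Finset.prod_eq_zero (Finset.mem_univ i) h.symm
      rw [this] at hdetCpos
      exact lt_irrefl _ hdetCpos
  have hBeq : S * C * S = B := by
    rw [hCdef, ← mul_assoc, ← mul_assoc, mul_nonsing_inv _ hSunit, one_mul,
      mul_assoc, nonsing_inv_mul _ hSunit, mul_one]
  have hsum : a • A + b • B = S * (a • 1 + b • C) * S := by
    rw [mul_add, add_mul, mul_smul_comm, mul_smul_comm, smul_mul_assoc, smul_mul_assoc,
      mul_one, hSS, hBeq]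
  have hdet : (a • A + b • B).det = A.det * (a • 1 + b • C).det := by
    rw [hsum, det_mul, det_mul,
      show S.det * (a • 1 + b • C).det * S.det = (S.det * S.det) * (a • 1 + b • C).det by ring,
      ← det_mul, hSS]
  have key : (a • 1 + b • C).det = ∏ i, (a + b * μ i) := det_smul_one_add_smul C hCps.isHermitian a b
  have hterm_pos : ∀ i, 0 < a + b * μ i := fun i => add_pos ha (mul_pos hb (hμpos i))
  have hprodpos : 0 < (a • 1 + b • C).det := by
    rw [key]; exact Finset.prod_pos fun i _ => hterm_pos i
  have hlog : Real.log (a • A + b • B).det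
      = Real.log A.det + ∑ i, Real.log (a + b * μ i) := by
    rw [hdet, Real.log_mul hdetA.ne' hprodpos.ne', key,
      Real.log_prod (fun i _ => (hterm_pos i).ne')]
  have hptwise : ∀ i, b * Real.log (μ i) ≤ Real.log (a + b * μ i) := by
    intro i
    have := strictConcaveOn_log_Ioi.concaveOn.2 (Set.mem_Ioi.2 one_pos)
      (Set.mem_Ioi.2 (hμpos i)) ha.le hb.le hab
    simpa [smul_eq_mul, Real.log_one] using this
  have hlogC : Real.log C.det = Real.log B.det - Real.log A.det := by
    rw [hdetC, Real.log_div hdetB.ne' hdetA.ne']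
  have hlogCsum : ∑ i, Real.log (μ i) = Real.log B.det - Real.log A.det := by
    rw [← hlogC, hdetCprod, Real.log_prod (fun i _ => (hμpos i).ne')]
  have ha' : a = 1 - b := by linarith
  have hexpand : a * Real.log A.det + b * Real.log B.det
      = Real.log A.det + b * (Real.log B.det - Real.log A.det) := by rw [ha']; ring
  constructor
  · have hsumle : ∑ i, b * Real.log (μ i) ≤ ∑ i, Real.log (a + b * μ i) :=
      Finset.sum_le_sum (fun i _ => hptwise i)
    rw [← Finset.mul_sum, hlogCsum] at hsumle
    rw [hlog, hexpand]
    linarith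
  · intro hAB
    have hCne : C ≠ 1 := by
      intro h
      rw [h, mul_one, hSS] at hBeq
      exact hAB hBeq
    have hex : ∃ i, μ i ≠ 1 := by
      by_contra h
      push_neg at h
      apply hCne
      have hdiag : diagonal (RCLike.ofReal ∘ hCps.isHermitian.eigenvalues)
          = (1 : Matrix N N ℝ) := by
        have hfun : (RCLike.ofReal ∘ hCps.isHermitian.eigenvalues : N → ℝ) = fun _ => 1 :=
          funext fun i => by simpa using h i
        rw [hfun, diagonal_one]
      calc C = _ := hCps.isHermitian.spectral_theorem
        _ = 1 := by
          rw [hdiag, Unitary.conjStarAlgAut_apply, mul_one]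
          exact (Matrix.mem_unitaryGroup_iff).mp hCps.isHermitian.eigenvectorUnitary.2
    obtain ⟨i0, hi0⟩ := hex
    have hstrict : b * Real.log (μ i0) < Real.log (a + b * μ i0) := by
      have := strictConcaveOn_log_Ioi.2 (Set.mem_Ioi.2 one_pos)
        (Set.mem_Ioi.2 (hμpos i0)) (fun h => hi0 h.symm) ha hb hab
      simpa [smul_eq_mul, Real.log_one] using this
    have hsumlt : ∑ i, b * Real.log (μ i) < ∑ i, Real.log (a + b * μ i) :=
      Finset.sum_lt_sum (fun i _ => hptwise i) ⟨i0, Finset.mem_univ i0, hstrict⟩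
    rw [← Finset.mul_sum, hlogCsum] at hsumlt
    rw [hlog, hexpand]
    linarith

lemma strictConcaveOn_logdet :
    StrictConcaveOn ℝ {M : Matrix N N ℝ | M.PosDef} (fun M => Real.log M.det) := by
  constructor
  · intro x hx y hy a b ha hb hab
    rcases eq_or_lt_of_le ha with rfl | ha'
    · simpa [(by linarith : b = 1)] using hy
    rcases eq_or_lt_of_le hb with rfl | hb'
    · simpa [(by linarith : a = 1)] using hx
    exact (posDef_smul' hx ha').add (posDef_smul' hy hb')
  · intro x hx y hy hxy a b ha hb hab
    have := (logdet_two_point hx hy ha hb hab).2 hxy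
    simpa [smul_eq_mul] using this

theorem aux_coding {k : ℕ} (hk : 0 < k)
    (A : Fin k → Matrix N N ℝ) (hA : ∀ j, (A j).PosSemidef)
    (m : Fin k → ℝ) (hm : ∀ j, 0 < m j) (c : ℝ) (hc : 0 ≤ c) :
    (∑ j, m j / 2 * Real.log (1 + (c / m j) • A j).det
      ≤ (∑ j, m j) / 2 * Real.log (1 + (c / ∑ j, m j) • ∑ j, A j).det)
    ∧ (∑ j, m j / 2 * Real.log (1 + (c / m j) • A j).det
      = (∑ j, m j) / 2 * Real.log (1 + (c / ∑ j, m j) • ∑ j, A j).det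
      ↔ ∀ j₁ j₂, (c / m j₁) • A j₁ = (c / m j₂) • A j₂) := by
  classical
  haveI : Nonempty (Fin k) := ⟨⟨0, hk⟩⟩
  set M : ℝ := ∑ j, m j with hM
  have hMpos : 0 < M := Finset.sum_pos (fun j _ => hm j) Finset.univ_nonempty
  set w : Fin k → ℝ := fun j => m j / M with hw
  have hwpos : ∀ j, 0 < w j := fun j => div_pos (hm j) hMpos
  have hw1 : ∑ j, w j = 1 := by
    rw [hw]; rw [← Finset.sum_div]; exact div_self hMpos.ne'
  set B : Fin k → Matrix N N ℝ := fun j => 1 + (c / m j) • A j with hB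
  have hBpd : ∀ j, (B j).PosDef := fun j =>
    Matrix.PosDef.add_posSemidef Matrix.PosDef.one
      (posSemidef_smul' (hA j) (div_nonneg hc (hm j).le))
  have hterm : ∀ j, w j • B j = w j • (1 : Matrix N N ℝ) + (c / M) • A j := by
    intro j
    have hsc : w j * (c / m j) = c / M := by
      rw [hw]
      have h1 : m j ≠ 0 := (hm j).ne'
      have h2 : M ≠ 0 := hMpos.ne'
      field_simp
    rw [hB, smul_add, smul_smul, hsc]
  have hsum : ∑ j, w j • B j = 1 + (c / M) • ∑ j, A j := by
    rw [Finset.sum_congr rfl (fun j _ => hterm j), Finset.sum_add_distrib,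
      ← Finset.sum_smul, hw1, one_smul, ← Finset.smul_sum]
  have hlhs : ∑ j, m j / 2 * Real.log (1 + (c / m j) • A j).det
      = M / 2 * ∑ j, w j • Real.log (B j).det := by
    rw [Finset.mul_sum]
    refine Finset.sum_congr rfl fun j _ => ?_
    rw [smul_eq_mul, hw]
    field_simp
    ring
  have hrhs : (∑ j, m j) / 2 * Real.log (1 + (c / ∑ j, m j) • ∑ j, A j).det
      = M / 2 * Real.log (∑ j, w j • B j).det := by rw [hsum, hM]
  have hmem : ∀ j ∈ Finset.univ, B j ∈ {M : Matrix N N ℝ | M.PosDef} :=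
    fun j _ => hBpd j
  constructor
  · rw [hlhs, hrhs]
    have := strictConcaveOn_logdet.concaveOn.le_map_sum
      (fun j (_ : j ∈ Finset.univ) => (hwpos j).le) hw1 hmem
    have h2 : (M / 2) * (∑ j, w j • Real.log (B j).det)
        ≤ (M / 2) * Real.log (∑ j, w j • B j).det := by
      apply mul_le_mul_of_nonneg_left this (by positivity)
    exact h2
  · rw [hlhs, hrhs]
    have hiff := strictConcaveOn_logdet.map_sum_eq_iff
      (fun j (_ : j ∈ Finset.univ) => hwpos j) hw1 hmem
    constructor
    · intro h
      have h' : Real.log (∑ j, w j • B j).det = ∑ j, w j • Real.log (B j).det := by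
        have hM2 : (M / 2) ≠ 0 := by positivity
        exact (mul_left_cancel₀ hM2 h).symm
      have hall := hiff.1 h'
      intro j₁ j₂
      have e1 : B j₁ = B j₂ := by
        rw [hall j₁ (Finset.mem_univ _), hall j₂ (Finset.mem_univ _)]
      have := e1
      rw [hB] at this
      exact add_left_cancel this
    · intro h
      have hBconst : ∀ j₁ j₂, B j₁ = B j₂ := by
        intro j₁ j₂; rw [hB]; simp only; rw [h j₁ j₂]
      have hall : ∀ j ∈ Finset.univ, B j = ∑ i, w i • B i := by
        intro j _
        have : ∑ i, w i • B i = ∑ i, w i • B j := by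
          refine Finset.sum_congr rfl fun i _ => by rw [hBconst i j]
        rw [this, ← Finset.sum_smul, hw1, one_smul]
      have h' := hiff.2 hall
      rw [h']

theorem coding_rate_lower_bound {n k : ℕ} (mj : Fin k → ℕ) (hmj : ∀ j, 0 < mj j)
    (Z : (j : Fin k) → Matrix (Fin n) (Fin (mj j)) ℝ) (ε : ℝ) (hε : 0 < ε) :
    let mt : ℝ := ((∑ j, mj j : ℕ) : ℝ)
    let lhs : ℝ := ∑ j, (mj j : ℝ) / 2 *
      Real.log ((1 + ((n : ℝ) / (mj j * ε ^ 2)) • (Z j * (Z j)ᵀ)).det)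
    let rhs : ℝ := mt / 2 *
      Real.log ((1 + ((n : ℝ) / (mt * ε ^ 2)) • (∑ j, Z j * (Z j)ᵀ)).det)
    lhs ≤ rhs ∧
    (lhs = rhs ↔ ∀ j₁ j₂ : Fin k,
      ((mj j₁ : ℝ))⁻¹ • (Z j₁ * (Z j₁)ᵀ) = ((mj j₂ : ℝ))⁻¹ • (Z j₂ * (Z j₂)ᵀ)) := by
  intro mt lhs rhs
  rcases Nat.eq_zero_or_pos k with hk | hk
  · subst hk
    refine ⟨le_of_eq ?_, ?_, ?_⟩
    · simp [lhs, rhs, mt]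
    · intro _ j₁; exact j₁.elim0
    · intro _; simp [lhs, rhs, mt]
  · set c : ℝ := (n : ℝ) / ε ^ 2 with hc
    have hcnn : 0 ≤ c := by positivity
    have hm : ∀ j, (0 : ℝ) < (mj j : ℝ) := fun j => Nat.cast_pos.2 (hmj j)
    have hA : ∀ j, (Z j * (Z j)ᵀ).PosSemidef := by
      intro j
      have := posSemidef_self_mul_conjTranspose (Z j)
      rwa [conjTranspose_eq_transpose_of_trivial] at this
    obtain ⟨hle, hiff⟩ := aux_coding (N := Fin n) hk (fun j => Z j * (Z j)ᵀ) hA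
      (fun j => (mj j : ℝ)) hm c hcnn
    have hcast : ((∑ j, mj j : ℕ) : ℝ) = ∑ j, ((mj j : ℝ)) := by push_cast; rfl
    have hco : ∀ j : Fin k, (n : ℝ) / ((mj j : ℝ) * ε ^ 2) = c / (mj j : ℝ) := by
      intro j
      rw [hc, div_div, mul_comm]
    have elhs : lhs = ∑ j, (mj j : ℝ) / 2 *
        Real.log ((1 + (c / (mj j : ℝ)) • (Z j * (Z j)ᵀ)).det) := by
      refine Finset.sum_congr rfl fun j _ => ?_
      rw [hco j]
    have erhs : rhs = (∑ j, (mj j : ℝ)) / 2 *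
        Real.log ((1 + (c / ∑ j, (mj j : ℝ)) • ∑ j, Z j * (Z j)ᵀ).det) := by
      show mt / 2 * _ = _
      rw [show mt = ∑ j, ((mj j : ℝ)) from hcast,
        show (n : ℝ) / ((∑ j, (mj j : ℝ)) * ε ^ 2) = c / ∑ j, (mj j : ℝ) by
          rw [hc, div_div, mul_comm]]
    have hcond : (∀ j₁ j₂ : Fin k, (c / (mj j₁ : ℝ)) • (Z j₁ * (Z j₁)ᵀ)
          = (c / (mj j₂ : ℝ)) • (Z j₂ * (Z j₂)ᵀ)) ↔
        (∀ j₁ j₂ : Fin k, ((mj j₁ : ℝ))⁻¹ • (Z j₁ * (Z j₁)ᵀ)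
          = ((mj j₂ : ℝ))⁻¹ • (Z j₂ * (Z j₂)ᵀ)) := by
      rcases Nat.eq_zero_or_pos n with hn | hn
      · constructor <;> intro _ j₁ j₂ <;>
          · ext i jj
            exact absurd i.isLt (by omega)
      · have hcpos : 0 < c := by rw [hc]; positivity
        constructor
        · intro h j₁ j₂
          have h' := h j₁ j₂
          rw [div_eq_mul_inv, div_eq_mul_inv, mul_smul, mul_smul] at h'
          exact smul_right_injective _ hcpos.ne' h'
        · intro h j₁ j₂
          rw [div_eq_mul_inv, div_eq_mul_inv, mul_smul, mul_smul, h j₁ j₂]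
    constructor
    · rw [elhs, erhs]; exact hle
    · rw [elhs, erhs]; exact hiff.trans hcond
end

section
/- Upper bound on the coding rate of concatenated data: for matrices Z^j ∈ ℝ^{n×m_j}, j = 1,…,k, with Z = [Z^1, …, Z^k] ∈ ℝ^{n×m}, m = Σⱼ m_j, and any ε > 0, (m/2) log det(I + (n/(m ε²)) Z Zᵀ) ≤ Σⱼ (m/2) log det(I + (n/(m ε²)) Z^j (Z^j)ᵀ), with equality if and only if (Z^{j₁})ᵀ Z^{j₂} = 0 for all 1 ≤ j₁ < j₂ ≤ k. -/
open Matrix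
set_option linter.unusedSectionVars false
set_option maxHeartbeats 1000000
open scoped MatrixOrder in
/-- replacement for the removed `Matrix.PosSemidef.sqrt`. -/
noncomputable def Matrix.PosSemidef.sqrt {p : Type*} [Fintype p] [DecidableEq p]
    {A : Matrix p p ℝ} (_hA : A.PosSemidef) : Matrix p p ℝ :=
  CFC.sqrt A

open scoped MatrixOrder in
lemma Matrix.PosSemidef.posSemidef_sqrt {p : Type*} [Fintype p] [DecidableEq p]
    {A : Matrix p p ℝ} (hA : A.PosSemidef) : hA.sqrt.PosSemidef :=
  (CFC.sqrt_nonneg A).posSemidef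

open scoped MatrixOrder in
lemma Matrix.PosSemidef.sqrt_mul_self {p : Type*} [Fintype p] [DecidableEq p]
    {A : Matrix p p ℝ} (hA : A.PosSemidef) : hA.sqrt * hA.sqrt = A :=
  CFC.sqrt_mul_sqrt_self A hA.nonneg

namespace CodingRateAux

variable {p : Type*} [Fintype p] [DecidableEq p]

/-- trace of `MᵀM` is nonneg, and zero iff `M = 0`, over ℝ. -/
lemma trace_tmul_nonneg {q : Type*} [Fintype q] (M : Matrix p q ℝ) :
    0 ≤ (Mᵀ * M).trace := by
  rw [Matrix.trace]
  refine Finset.sum_nonneg fun i _ => ?_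
  rw [Matrix.diag_apply, Matrix.mul_apply]
  exact Finset.sum_nonneg fun j _ => by
    rw [Matrix.transpose_apply]; exact mul_self_nonneg _

lemma trace_tmul_eq_zero_iff {q : Type*} [Fintype q] (M : Matrix p q ℝ) :
    (Mᵀ * M).trace = 0 ↔ M = 0 := by
  constructor
  · intro h
    ext j i
    have h1 : ∀ i ∈ (Finset.univ : Finset q), 0 ≤ ((Mᵀ * M).diag) i := fun i _ => by
      rw [Matrix.diag_apply, Matrix.mul_apply]
      exact Finset.sum_nonneg fun j _ => by
        rw [Matrix.transpose_apply]; exact mul_self_nonneg _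
    rw [Matrix.trace] at h
    have h2 := (Finset.sum_eq_zero_iff_of_nonneg h1).mp h i (Finset.mem_univ _)
    rw [Matrix.diag_apply, Matrix.mul_apply] at h2
    have h3 : ∀ x ∈ (Finset.univ : Finset p), (0:ℝ) ≤ Mᵀ i x * M x i := fun x _ => by
      rw [Matrix.transpose_apply]; exact mul_self_nonneg _
    have h4 := (Finset.sum_eq_zero_iff_of_nonneg h3).mp h2 j (Finset.mem_univ _)
    rw [Matrix.transpose_apply] at h4
    simpa using mul_self_eq_zero.mp h4
  · intro h; simp [h]

lemma det_one_add_psd {N : Matrix p p ℝ} (hN : N.PosSemidef) :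
    1 ≤ (1 + N).det ∧ ((1 + N).det = 1 ↔ N = 0) := by
  classical
  have hH := hN.isHermitian
  set U : Matrix p p ℝ := (hH.eigenvectorUnitary : Matrix p p ℝ) with hU
  have hUU : U * star U = 1 := mem_unitaryGroup_iff.mp hH.eigenvectorUnitary.2
  have hspec : N = U * Matrix.diagonal hH.eigenvalues * star U := by
    have h := hH.spectral_theorem
    rwa [show (RCLike.ofReal ∘ hH.eigenvalues : p → ℝ) = hH.eigenvalues by
      funext i; simp [RCLike.ofReal_real_eq_id]] at h
  have key : 1 + N = U * Matrix.diagonal (fun i => 1 + hH.eigenvalues i) * star U := by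
    have hd : (Matrix.diagonal fun i => 1 + hH.eigenvalues i)
        = 1 + Matrix.diagonal hH.eigenvalues := by
      rw [← Matrix.diagonal_one, ← Matrix.diagonal_add]
    rw [hd, Matrix.mul_add, Matrix.add_mul, Matrix.mul_one, hUU, ← hspec]
  have hdetU : U.det * (star U).det = 1 := by
    rw [← Matrix.det_mul, hUU, Matrix.det_one]
  have hdet : (1 + N).det = ∏ i, (1 + hH.eigenvalues i) := by
    rw [key, Matrix.det_mul, Matrix.det_mul, mul_comm, ← mul_assoc, mul_comm (star U).det,
      hdetU, one_mul, Matrix.det_diagonal]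
  have hev : ∀ i, 0 ≤ hH.eigenvalues i := hN.eigenvalues_nonneg
  have h1 : ∀ i ∈ (Finset.univ : Finset p), (1:ℝ) ≤ 1 + hH.eigenvalues i := fun i _ => by
    linarith [hev i]
  have hprod : (1:ℝ) ≤ ∏ i, (1 + hH.eigenvalues i) := by
    calc (1:ℝ) = ∏ _i : p, 1 := by simp
    _ ≤ ∏ i, (1 + hH.eigenvalues i) :=
      Finset.prod_le_prod (fun i _ => zero_le_one) h1
  refine ⟨hdet ▸ hprod, ?_⟩
  rw [hdet]
  constructor
  · intro h
    have hev0 : ∀ i, hH.eigenvalues i = 0 := by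
      intro i
      have hrest : (1:ℝ) ≤ ∏ j ∈ Finset.univ.erase i, (1 + hH.eigenvalues j) := by
        calc (1:ℝ) = ∏ _j ∈ Finset.univ.erase i, 1 := by simp
        _ ≤ _ := Finset.prod_le_prod (fun j _ => zero_le_one)
            (fun j hj => h1 j (Finset.mem_univ _))
      have := Finset.mul_prod_erase Finset.univ (fun i => 1 + hH.eigenvalues i)
        (Finset.mem_univ i)
      rw [← this] at h
      have h' : (1 + hH.eigenvalues i) *
          (∏ j ∈ Finset.univ.erase i, (1 + hH.eigenvalues j)) = 1 := by simpa using h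
      nlinarith [hev i]
    rw [hspec]
    have : Matrix.diagonal hH.eigenvalues = 0 := by
      ext a b; by_cases hab : a = b <;> simp [Matrix.diagonal, hab, hev0]
    rw [this, Matrix.mul_zero, Matrix.zero_mul]
  · intro h; rw [← hdet, h, add_zero, Matrix.det_one]

/-- pure algebra: `E*E + M = E*(1 + E⁻¹*M*E⁻¹)*E` when `E` invertible. -/
lemma factor_add (E M : Matrix p p ℝ) (hE : IsUnit E.det) :
    E * E + M = E * (1 + E⁻¹ * M * E⁻¹) * E := by
  have h1 : E * E⁻¹ = 1 := Matrix.mul_nonsing_inv E hE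
  have h2 : E⁻¹ * E = 1 := Matrix.nonsing_inv_mul E hE
  rw [Matrix.mul_add, Matrix.add_mul, Matrix.mul_one]
  congr 1
  symm
  calc E * (E⁻¹ * M * E⁻¹) * E = (E * E⁻¹) * M * (E⁻¹ * E) := by
        simp only [Matrix.mul_assoc]
  _ = M := by rw [h1, h2, Matrix.one_mul, Matrix.mul_one]

/-- `det P ≤ det (P + M)` for `P` posdef, `M` psd, with equality iff `M = 0`. -/
lemma det_add_psd {P M : Matrix p p ℝ} (hP : P.PosDef) (hM : M.PosSemidef) :
    P.det ≤ (P + M).det ∧ ((P + M).det = P.det ↔ M = 0) := by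
  set E := hP.posSemidef.sqrt with hEdef
  have hEpsd : E.PosSemidef := hP.posSemidef.posSemidef_sqrt
  have hEE : E * E = P := hP.posSemidef.sqrt_mul_self
  have hdetP : 0 < P.det := hP.det_pos
  have hdetE : IsUnit E.det := by
    rw [isUnit_iff_ne_zero]
    intro h
    rw [← hEE, Matrix.det_mul, h, mul_zero] at hdetP
    exact lt_irrefl _ hdetP
  have h1 : E * E⁻¹ = 1 := Matrix.mul_nonsing_inv E hdetE
  have h2 : E⁻¹ * E = 1 := Matrix.nonsing_inv_mul E hdetE
  have hEip : (E⁻¹).PosSemidef := hEpsd.inv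
  set N := E⁻¹ * M * E⁻¹ with hNdef
  have hNpsd : N.PosSemidef := by
    have := hM.conjTranspose_mul_mul_same E⁻¹
    rwa [hEip.isHermitian.eq] at this
  have key : P + M = E * (1 + N) * E := by rw [← hEE]; exact factor_add E M hdetE
  have hdet : (P + M).det = P.det * (1 + N).det := by
    rw [key, Matrix.det_mul, Matrix.det_mul, ← hEE, Matrix.det_mul]; ring
  obtain ⟨hge, hiff⟩ := det_one_add_psd hNpsd
  constructor
  · rw [hdet]; nlinarith
  · rw [hdet]
    constructor
    · intro h
      have hd1 : (1 + N).det = 1 := by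
        have h' : P.det * (1 + N).det = P.det * 1 := by rw [mul_one]; exact h
        exact mul_left_cancel₀ (ne_of_gt hdetP) h'
      have hN0 : N = 0 := hiff.mp hd1
      have : M = E * N * E := by
        rw [hNdef]
        calc M = (E * E⁻¹) * M * (E⁻¹ * E) := by
              rw [h1, h2, Matrix.one_mul, Matrix.mul_one]
        _ = E * (E⁻¹ * M * E⁻¹) * E := by simp only [Matrix.mul_assoc]
      rw [this, hN0, Matrix.mul_zero, Matrix.zero_mul]
    · intro h
      have : N = 0 := by rw [hNdef, h, Matrix.mul_zero, Matrix.zero_mul]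
      rw [this, add_zero, Matrix.det_one, mul_one]


/-- Two-block key lemma. -/
lemma det_one_add_add {A B : Matrix p p ℝ} (hA : A.PosSemidef) (hB : B.PosSemidef) :
    (1 + A + B).det ≤ (1 + A).det * (1 + B).det ∧
    ((1 + A + B).det = (1 + A).det * (1 + B).det ↔ A * B = 0) := by
  have hC : (1 + A : Matrix p p ℝ).PosDef := Matrix.PosDef.one.add_posSemidef hA
  set E := hC.posSemidef.sqrt with hEdef
  have hEpsd : E.PosSemidef := hC.posSemidef.posSemidef_sqrt
  have hEE : E * E = 1 + A := hC.posSemidef.sqrt_mul_self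
  have hdetC : 0 < (1 + A : Matrix p p ℝ).det := hC.det_pos
  have hdetE : IsUnit E.det := by
    rw [isUnit_iff_ne_zero]
    intro h
    rw [← hEE, Matrix.det_mul, h, mul_zero] at hdetC
    exact lt_irrefl _ hdetC
  have h1 : E * E⁻¹ = 1 := Matrix.mul_nonsing_inv E hdetE
  have h2 : E⁻¹ * E = 1 := Matrix.nonsing_inv_mul E hdetE
  set D := E⁻¹ with hDdef
  have hDpsd : D.PosSemidef := hEpsd.inv
  have hDh : Dᴴ = D := hDpsd.isHermitian.eq
  set X := hA.sqrt with hXdef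
  have hXpsd : X.PosSemidef := hA.posSemidef_sqrt
  have hXX : X * X = A := hA.sqrt_mul_self
  have hXh : Xᴴ = X := hXpsd.isHermitian.eq
  set Y := hB.sqrt with hYdef
  have hYpsd : Y.PosSemidef := hB.posSemidef_sqrt
  have hYY : Y * Y = B := hB.sqrt_mul_self
  have hYh : Yᴴ = Y := hYpsd.isHermitian.eq
  -- step 1 : det (1 + A + B) = det C * det (1 + D * B * D)
  have step1 : (1 + A + B).det = (1 + A).det * (1 + D * B * D).det := by
    have : 1 + A + B = E * (1 + D * B * D) * E := by
      rw [← hEE]; exact factor_add E B hdetE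
    rw [this, Matrix.det_mul, Matrix.det_mul, ← hEE, Matrix.det_mul]; ring
  -- step 2 : det (1 + D*B*D) = det (1 + Y*D*(D*Y))
  have step2 : (1 + D * B * D).det = (1 + Y * D * (D * Y)).det := by
    have e1 : D * B * D = (D * Y) * (Y * D) := by
      rw [← hYY]; simp only [Matrix.mul_assoc]
    rw [e1, Matrix.det_one_add_mul_comm]
  -- step 3 : 1 + B = (1 + Y*D*(D*Y)) + Y*D*(A*(D*Y))
  have hDCD : D * (E * E) * D = 1 := by
    calc D * (E * E) * D = (D * E) * (E * D) := by simp only [Matrix.mul_assoc]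
    _ = 1 := by rw [hDdef, h2, h1, Matrix.one_mul]
  have hDAD : D * D + D * A * D = 1 := by
    have h' : D * (E * E) * D = D * D + D * A * D := by
      rw [hEE, Matrix.mul_add, Matrix.add_mul, Matrix.mul_one]
    rw [← h', hDCD]
  have step3 : 1 + B = (1 + Y * D * (D * Y)) + Y * D * (A * (D * Y)) := by
    have h' : Y * D * (D * Y) + Y * D * (A * (D * Y))
        = Y * (D * D + D * A * D) * Y := by
      rw [Matrix.mul_add, Matrix.add_mul]
      simp only [Matrix.mul_assoc]
    rw [add_assoc, h', hDAD, Matrix.mul_one, hYY]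
  -- middle matrices
  have hP' : (1 + Y * D * (D * Y) : Matrix p p ℝ).PosDef := by
    refine Matrix.PosDef.one.add_posSemidef ?_
    have h' : Y * D * (D * Y) = (D * Y)ᴴ * (D * Y) := by
      rw [Matrix.conjTranspose_mul, hDh, hYh]
    rw [h']
    exact Matrix.posSemidef_conjTranspose_mul_self _
  have hWform : Y * D * (A * (D * Y)) = (X * (D * Y))ᴴ * (X * (D * Y)) := by
    rw [Matrix.conjTranspose_mul, hXh, Matrix.conjTranspose_mul, hDh, hYh, ← hXX]
    simp only [Matrix.mul_assoc]
  have hM' : (Y * D * (A * (D * Y)) : Matrix p p ℝ).PosSemidef := by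
    rw [hWform]; exact Matrix.posSemidef_conjTranspose_mul_self _
  obtain ⟨hle2, hiff2⟩ := det_add_psd hP' hM'
  have ineq2 : (1 + Y * D * (D * Y)).det ≤ (1 + B).det := by rw [step3]; exact hle2
  have eqiff2 : (1 + Y * D * (D * Y)).det = (1 + B).det ↔ X * (D * Y) = 0 := by
    rw [step3, eq_comm, hiff2, hWform]
    exact Matrix.conjTranspose_mul_self_eq_zero
  -- commutation facts
  have hEA : E * A = A * E := by
    have h' : E * (E * E) = (E * E) * E := by simp only [Matrix.mul_assoc]
    rw [hEE, Matrix.mul_add, Matrix.add_mul, Matrix.mul_one, Matrix.one_mul] at h'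
    exact add_left_cancel h'
  have hDA : D * A = A * D := by
    have c1 : D * (E * A) * D = A * D := by
      calc D * (E * A) * D = (D * E) * (A * D) := by simp only [Matrix.mul_assoc]
      _ = A * D := by rw [hDdef, h2, Matrix.one_mul]
    have c2 : D * (A * E) * D = D * A := by
      calc D * (A * E) * D = (D * A) * (E * D) := by simp only [Matrix.mul_assoc]
      _ = D * A := by rw [hDdef, h1, Matrix.mul_one]
    rw [← c2, ← hEA]
    exact c1
  -- W = 0 implies A * B = 0
  have W_to_AB : X * (D * Y) = 0 → A * B = 0 := by
    intro hW0
    have hADB : A * (D * B) = 0 := by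
      have h' : A * (D * B) = X * ((X * (D * Y)) * Y) := by
        rw [← hXX, ← hYY]; simp only [Matrix.mul_assoc]
      rw [h', hW0, Matrix.zero_mul, Matrix.mul_zero]
    have hDAB : D * (A * B) = 0 := by
      rw [← Matrix.mul_assoc, hDA, Matrix.mul_assoc, hADB]
    calc A * B = (E * D) * (A * B) := by rw [hDdef, h1, Matrix.one_mul]
    _ = E * (D * (A * B)) := by rw [Matrix.mul_assoc]
    _ = 0 := by rw [hDAB, Matrix.mul_zero]
  -- A * B = 0 implies det equality
  have AB_to_eq : A * B = 0 →
      (1 + A + B).det = (1 + A).det * (1 + B).det := by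
    intro hAB
    have expand : (1 + A) * (1 + B) = 1 + A + B + A * B := by noncomm_ring
    rw [← Matrix.det_mul, expand, hAB, add_zero]
  have main : (1 + A + B).det = (1 + A).det * (1 + Y * D * (D * Y)).det :=
    step1.trans (by rw [step2])
  constructor
  · rw [main]
    exact mul_le_mul_of_nonneg_left ineq2 hdetC.le
  · constructor
    · intro h
      rw [main] at h
      have h' : (1 + Y * D * (D * Y)).det = (1 + B).det :=
        mul_left_cancel₀ (ne_of_gt hdetC) h
      exact W_to_AB (eqiff2.mp h')
    · exact AB_to_eq

lemma psd_transpose_eq {A : Matrix p p ℝ} (hA : A.PosSemidef) : Aᵀ = A := by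
  rw [← Matrix.conjTranspose_eq_transpose_of_trivial]; exact hA.isHermitian.eq

lemma symm_mul_eq_zero {A B : Matrix p p ℝ} (hA : A.PosSemidef) (hB : B.PosSemidef)
    (h : A * B = 0) : B * A = 0 := by
  have h' := congrArg Matrix.transpose h
  rwa [Matrix.transpose_mul, Matrix.transpose_zero, psd_transpose_eq hA,
    psd_transpose_eq hB] at h'

lemma posSemidef_smul {M : Matrix p p ℝ} (hM : M.PosSemidef) {c : ℝ} (hc : 0 ≤ c) :
    (c • M).PosSemidef := by
  refine ⟨?_, fun x => ?_⟩
  · show (c • M)ᴴ = c • M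
    rw [Matrix.conjTranspose_smul, star_trivial, hM.isHermitian.eq]
  · exact (hM.smul hc).2 x

lemma posSemidef_sum {ι : Type*} (s : Finset ι) (A : ι → Matrix p p ℝ)
    (h : ∀ i ∈ s, (A i).PosSemidef) : (∑ i ∈ s, A i).PosSemidef :=
  Finset.sum_induction A _ (fun _ _ ha hb => ha.add hb) Matrix.PosSemidef.zero h

lemma trace_mul_psd {A B : Matrix p p ℝ} (hA : A.PosSemidef) (hB : B.PosSemidef) :
    0 ≤ (A * B).trace ∧ ((A * B).trace = 0 ↔ A * B = 0) := by
  set X := hA.sqrt with hXdef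
  have hXX : X * X = A := hA.sqrt_mul_self
  have hXt : Xᵀ = X := psd_transpose_eq hA.posSemidef_sqrt
  set Y := hB.sqrt with hYdef
  have hYY : Y * Y = B := hB.sqrt_mul_self
  have hYt : Yᵀ = Y := psd_transpose_eq hB.posSemidef_sqrt
  have t1 : (A * B).trace = ((Y * (X * X)) * Y).trace := by
    rw [← hXX, ← hYY]
    calc ((X * X) * (Y * Y)).trace = ((Y * Y) * (X * X)).trace :=
      Matrix.trace_mul_comm _ _
    _ = (Y * (Y * (X * X))).trace := by rw [Matrix.mul_assoc]
    _ = ((Y * (X * X)) * Y).trace := Matrix.trace_mul_comm _ _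
  have t2 : (Y * (X * X)) * Y = (X * Y)ᵀ * (X * Y) := by
    rw [Matrix.transpose_mul, hXt, hYt]
    simp only [Matrix.mul_assoc]
  constructor
  · rw [t1, t2]; exact trace_tmul_nonneg _
  · constructor
    · intro h
      rw [t1, t2, trace_tmul_eq_zero_iff] at h
      rw [← hXX, ← hYY]
      calc (X * X) * (Y * Y) = X * ((X * Y) * Y) := by simp only [Matrix.mul_assoc]
      _ = 0 := by rw [h, Matrix.zero_mul, Matrix.mul_zero]
    · intro h; rw [h, Matrix.trace_zero]

lemma det_one_add_sum {k : ℕ} (A : Fin k → Matrix p p ℝ) (hA : ∀ j, (A j).PosSemidef)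
    (s : Finset (Fin k)) :
    (1 + ∑ j ∈ s, A j).det ≤ ∏ j ∈ s, (1 + A j).det ∧
    ((1 + ∑ j ∈ s, A j).det = ∏ j ∈ s, (1 + A j).det ↔
      ∀ i ∈ s, ∀ j ∈ s, i ≠ j → A i * A j = 0) := by
  classical
  induction s using Finset.induction_on with
  | empty => simp
  | @insert a t ha ih =>
    obtain ⟨ihle, ihiff⟩ := ih
    set S := ∑ j ∈ t, A j with hSdef
    have hSpsd : S.PosSemidef := posSemidef_sum t A (fun i _ => hA i)
    rw [Finset.sum_insert ha, Finset.prod_insert ha]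
    have hins : (1 : Matrix p p ℝ) + (A a + S) = 1 + A a + S := by rw [add_assoc]
    obtain ⟨l3le, l3iff⟩ := det_one_add_add (hA a) hSpsd
    have hDa1 : 1 ≤ (1 + A a).det := (det_one_add_psd (hA a)).1
    have hS1 : 1 ≤ (1 + S).det := (det_one_add_psd hSpsd).1
    have h2 : (1 + A a).det * (1 + S).det ≤ (1 + A a).det * ∏ j ∈ t, (1 + A j).det :=
      mul_le_mul_of_nonneg_left ihle (by linarith)
    constructor
    · rw [hins]; exact l3le.trans h2
    · rw [hins]
      constructor
      · intro h
        have e1 : (1 + A a + S).det = (1 + A a).det * (1 + S).det :=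
          le_antisymm l3le (by rw [h]; exact h2)
        have e2 : (1 + A a).det * (1 + S).det
            = (1 + A a).det * ∏ j ∈ t, (1 + A j).det := by rw [← e1, h]
        have hpw : ∀ i ∈ t, ∀ j ∈ t, i ≠ j → A i * A j = 0 :=
          ihiff.mp (mul_left_cancel₀ (by linarith) e2)
        have hAaS : A a * S = 0 := l3iff.mp e1
        have haj : ∀ j ∈ t, A a * A j = 0 := by
          have tr0 : ∑ j ∈ t, (A a * A j).trace = 0 := by
            rw [← Matrix.trace_sum, ← Finset.mul_sum, ← hSdef, hAaS, Matrix.trace_zero]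
          intro j hj
          have := (Finset.sum_eq_zero_iff_of_nonneg
            (fun i _ => (trace_mul_psd (hA a) (hA i)).1)).mp tr0 j hj
          exact (trace_mul_psd (hA a) (hA j)).2.mp this
        intro i hi j hj hij
        rcases Finset.mem_insert.mp hi with rfl | hi'
        · rcases Finset.mem_insert.mp hj with rfl | hj'
          · exact absurd rfl hij
          · exact haj j hj'
        · rcases Finset.mem_insert.mp hj with rfl | hj'
          · exact symm_mul_eq_zero (hA j) (hA i) (haj i hi')
          · exact hpw i hi' j hj' hij
      · intro hall
        have hAaS : A a * S = 0 := by
          rw [hSdef, Finset.mul_sum]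
          refine Finset.sum_eq_zero fun j hj => ?_
          exact hall a (Finset.mem_insert_self a t) j (Finset.mem_insert_of_mem hj)
            (fun h => ha (h ▸ hj))
        have hprodt : (1 + S).det = ∏ j ∈ t, (1 + A j).det :=
          ihiff.mpr (fun i hi j hj hij => hall i (Finset.mem_insert_of_mem hi) j
            (Finset.mem_insert_of_mem hj) hij)
        calc (1 + A a + S).det = (1 + A a).det * (1 + S).det := l3iff.mpr hAaS
        _ = (1 + A a).det * ∏ j ∈ t, (1 + A j).det := by rw [hprodt]

lemma key_log {k : ℕ} (A : Fin k → Matrix p p ℝ) (hA : ∀ j, (A j).PosSemidef)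
    (mt : ℝ) (hmt : 0 < mt) :
    mt / 2 * Real.log ((1 + ∑ j, A j).det) ≤
      ∑ j, mt / 2 * Real.log ((1 + A j).det) ∧
    (mt / 2 * Real.log ((1 + ∑ j, A j).det) =
        ∑ j, mt / 2 * Real.log ((1 + A j).det) ↔
      ∀ i j : Fin k, i ≠ j → A i * A j = 0) := by
  obtain ⟨hle, hiff⟩ := det_one_add_sum A hA Finset.univ
  have hD1 : 1 ≤ (1 + ∑ j, A j).det :=
    (det_one_add_psd (posSemidef_sum Finset.univ A fun i _ => hA i)).1
  have hDj1 : ∀ j, 1 ≤ (1 + A j).det := fun j => (det_one_add_psd (hA j)).1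
  have hprod1 : (1:ℝ) ≤ ∏ j, (1 + A j).det := by
    calc (1:ℝ) = ∏ _j : Fin k, 1 := by simp
    _ ≤ _ := Finset.prod_le_prod (fun j _ => zero_le_one) (fun j _ => hDj1 j)
  have hrhs : ∑ j, mt / 2 * Real.log ((1 + A j).det)
      = mt / 2 * Real.log (∏ j, (1 + A j).det) := by
    rw [Real.log_prod (fun j _ => ne_of_gt (by linarith [hDj1 j])), Finset.mul_sum]
  have hlog : Real.log ((1 + ∑ j, A j).det) ≤ Real.log (∏ j, (1 + A j).det) :=
    Real.log_le_log (by linarith) hle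
  constructor
  · rw [hrhs]
    exact mul_le_mul_of_nonneg_left hlog (by linarith)
  · rw [hrhs]
    constructor
    · intro h
      have h1 : Real.log ((1 + ∑ j, A j).det) = Real.log (∏ j, (1 + A j).det) :=
        mul_left_cancel₀ (by positivity) h
      have h2 : (1 + ∑ j, A j).det = ∏ j, (1 + A j).det := by
        have e1 := Real.exp_log (show (0:ℝ) < (1 + ∑ j, A j).det by linarith)
        have e2 := Real.exp_log (show (0:ℝ) < ∏ j, (1 + A j).det by linarith)
        rw [← e1, ← e2, h1]
      intro i j hij
      exact hiff.mp h2 i (Finset.mem_univ _) j (Finset.mem_univ _) hij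
    · intro h
      rw [hiff.mpr (fun i _ j _ hij => h i j hij)]

end CodingRateAux

theorem coding_rate_upper_bound {n k : ℕ} (mj : Fin k → ℕ) (hmj : ∀ j, 0 < mj j)
    (Z : (j : Fin k) → Matrix (Fin n) (Fin (mj j)) ℝ) (ε : ℝ) (hε : 0 < ε) :
    let mt : ℝ := ((∑ j, mj j : ℕ) : ℝ)
    let lhs : ℝ := mt / 2 *
      Real.log ((1 + ((n : ℝ) / (mt * ε ^ 2)) • (∑ j, Z j * (Z j)ᵀ)).det)
    let rhs : ℝ := ∑ j, mt / 2 *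
      Real.log ((1 + ((n : ℝ) / (mt * ε ^ 2)) • (Z j * (Z j)ᵀ)).det)
    lhs ≤ rhs ∧
    (lhs = rhs ↔ ∀ j₁ j₂ : Fin k, j₁ ≠ j₂ → (Z j₁)ᵀ * Z j₂ = 0) := by
  intro mt lhs rhs
  have mt_eq : mt = ((∑ j, mj j : ℕ) : ℝ) := rfl
  have lhs_eq : lhs = mt / 2 *
      Real.log ((1 + ((n : ℝ) / (mt * ε ^ 2)) • (∑ j, Z j * (Z j)ᵀ)).det) := rfl
  have rhs_eq : rhs = ∑ j, mt / 2 *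
      Real.log ((1 + ((n : ℝ) / (mt * ε ^ 2)) • (Z j * (Z j)ᵀ)).det) := rfl
  rw [lhs_eq, rhs_eq, mt_eq]
  clear lhs_eq rhs_eq mt_eq
  rcases Nat.eq_zero_or_pos k with hk | hk
  · subst hk
    simp
  have hM : 0 < ∑ j, mj j := Finset.sum_pos (fun j _ => hmj j) ⟨⟨0, hk⟩, Finset.mem_univ _⟩
  have hmt : (0:ℝ) < ((∑ j, mj j : ℕ) : ℝ) := by exact_mod_cast hM
  rcases Nat.eq_zero_or_pos n with hn | hn
  · subst hn
    have hz : ∀ (j₁ j₂ : Fin k), (Z j₁)ᵀ * Z j₂ = 0 := fun j₁ j₂ => by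
      ext i l
      rw [Matrix.mul_apply]
      simp
    simp [hz]
  · set c : ℝ := (n : ℝ) / (((∑ j, mj j : ℕ) : ℝ) * ε ^ 2) with hc_def
    have hc : 0 < c := div_pos (by exact_mod_cast hn) (by positivity)
    have hApsd : ∀ j, ((fun j => c • (Z j * (Z j)ᵀ)) j).PosSemidef := fun j => by
      refine CodingRateAux.posSemidef_smul ?_ hc.le
      have h' := Matrix.posSemidef_self_mul_conjTranspose (Z j)
      rwa [Matrix.conjTranspose_eq_transpose_of_trivial] at h'
    obtain ⟨hle, hiff⟩ := CodingRateAux.key_log (fun j => c • (Z j * (Z j)ᵀ)) hApsd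
      (((∑ j, mj j : ℕ) : ℝ)) hmt
    have hss : c • (∑ j, Z j * (Z j)ᵀ) = ∑ j, c • (Z j * (Z j)ᵀ) := Finset.smul_sum
    rw [hss]
    constructor
    · exact hle
    · refine Iff.trans (by exact hiff) ?_
      constructor
      · intro h i j' hij'
        have h0 : (c • (Z i * (Z i)ᵀ)) * (c • (Z j' * (Z j')ᵀ)) = 0 := h i j' hij'
        have h1 : (c * c) • ((Z i * (Z i)ᵀ) * (Z j' * (Z j')ᵀ)) = 0 := by
          rw [← smul_smul, ← Matrix.mul_smul, ← Matrix.smul_mul]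
          exact h0
        have h2 : (Z i * (Z i)ᵀ) * (Z j' * (Z j')ᵀ) = 0 := by
          rcases smul_eq_zero.mp h1 with h' | h'
          · exact absurd h' (ne_of_gt (mul_pos hc hc))
          · exact h'
        have h3 : (((Z i)ᵀ * Z j')ᵀ * ((Z i)ᵀ * Z j')).trace = 0 := by
          have e : ((Z i)ᵀ * Z j')ᵀ * ((Z i)ᵀ * Z j')
              = (Z j')ᵀ * (Z i * ((Z i)ᵀ * Z j')) := by
            rw [Matrix.transpose_mul, Matrix.transpose_transpose]
            simp only [Matrix.mul_assoc]
          rw [e, Matrix.trace_mul_comm]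
          have e2 : (Z i * ((Z i)ᵀ * Z j')) * (Z j')ᵀ
              = (Z i * (Z i)ᵀ) * (Z j' * (Z j')ᵀ) := by
            simp only [Matrix.mul_assoc]
          rw [e2, h2, Matrix.trace_zero]
        exact (CodingRateAux.trace_tmul_eq_zero_iff _).mp h3
      · intro h i j' hij'
        have h0 := h i j' hij'
        have e : (Z i * (Z i)ᵀ) * (Z j' * (Z j')ᵀ)
            = Z i * (((Z i)ᵀ * Z j') * (Z j')ᵀ) := by
          simp only [Matrix.mul_assoc]
        show (c • (Z i * (Z i)ᵀ)) * (c • (Z j' * (Z j')ᵀ)) = 0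
        rw [Matrix.smul_mul, Matrix.mul_smul, smul_smul, e, h0, Matrix.zero_mul,
          Matrix.mul_zero, smul_zero]
end

section
/- Upper bound on the rate reduction: for Z ∈ ℝ^{n×m}, a collection of nonnegative diagonal matrices Π = {Π^j}ⱼ₌₁ᵏ with Σⱼ Π^j = I, and ε > 0, letting Z^j ∈ ℝ^{n×m_j} be Z Π^j with zero columns removed (m_j = tr Π^j, here assuming Π^j has 0/1 diagonal entries), the rate reduction ΔR(Z, Π, ε) = (1/2) log det(I + (n/(mε²)) Z Zᵀ) − Σⱼ (m_j/(2m)) log det(I + (n/(m_j ε²)) Z^j (Z^j)ᵀ) satisfies ΔR(Z, Π, ε) ≤ Σⱼ (1/(2m)) log( det^m(I + (n/(mε²)) Z^j (Z^j)ᵀ) / det^{m_j}(I + (n/(m_j ε²)) Z^j (Z^j)ᵀ) ), with equality if and only if (Z^{j₁})ᵀ Z^{j₂} = 0 for all j₁ ≠ j₂. -/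
open Matrix

variable {N : Type*} [Fintype N] [DecidableEq N]

/-- For PSD `E`, `1 ≤ det (1 + E)` with equality iff `E = 0`. -/
lemma det_one_add_psd {E : Matrix N N ℝ} (hE : E.PosSemidef) :
    1 ≤ (1 + E).det ∧ ((1 + E).det = 1 ↔ E = 0) := by
  have hH := hE.isHermitian
  set U : Matrix N N ℝ := (hH.eigenvectorUnitary : Matrix N N ℝ) with hU
  have hUU : U * star U = 1 := (Matrix.mem_unitaryGroup_iff).mp hH.eigenvectorUnitary.2
  have hspec : E = U * diagonal (RCLike.ofReal ∘ hH.eigenvalues) * star U :=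
    hH.spectral_theorem
  have honeE : 1 + E = U * (1 + diagonal (RCLike.ofReal ∘ hH.eigenvalues)) * star U := by
    rw [Matrix.mul_add, Matrix.add_mul, Matrix.mul_one, hUU, ← hspec]
  have hdet : (1 + E).det = ∏ i, (1 + hH.eigenvalues i) := by
    rw [honeE, det_mul, det_mul, mul_comm (det U), mul_assoc, ← det_mul, hUU, det_one, mul_one]
    rw [← diagonal_one, diagonal_add, det_diagonal]
    simp [RCLike.ofReal]
  have hnn : ∀ i : N, (1:ℝ) ≤ 1 + hH.eigenvalues i := fun i => by
    linarith [hE.eigenvalues_nonneg i]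
  have hone : (1:ℝ) ≤ ∏ i, (1 + hH.eigenvalues i) := by
    calc (1:ℝ) = ∏ _i : N, 1 := by simp
    _ ≤ ∏ i, (1 + hH.eigenvalues i) :=
      Finset.prod_le_prod (fun i _ => zero_le_one) (fun i _ => hnn i)
  constructor
  · rw [hdet]; exact hone
  · constructor
    · intro h
      rw [hdet] at h
      have hev : hH.eigenvalues = 0 := by
        funext i
        by_contra hne'
        have hne : hH.eigenvalues i ≠ 0 := by simpa using hne'
        have hpos : 0 < hH.eigenvalues i := lt_of_le_of_ne (hE.eigenvalues_nonneg i) (Ne.symm hne)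
        have hrest : (1:ℝ) ≤ ∏ j ∈ Finset.univ.erase i, (1 + hH.eigenvalues j) := by
          calc (1:ℝ) = ∏ _j ∈ Finset.univ.erase i, 1 := by simp
          _ ≤ _ := Finset.prod_le_prod (fun j _ => zero_le_one) (fun j _ => hnn j)
        have hsplit : (1 + hH.eigenvalues i) * ∏ j ∈ Finset.univ.erase i, (1 + hH.eigenvalues j)
            = 1 := (Finset.mul_prod_erase _ _ (Finset.mem_univ i)).trans h
        nlinarith
      rw [hspec, hev]
      show U * diagonal (RCLike.ofReal ∘ (0 : N → ℝ)) * star U = 0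
      have : RCLike.ofReal ∘ (0 : N → ℝ) = (0 : N → ℝ) := by funext j; simp
      rw [this]
      rw [show diagonal (0 : N → ℝ) = (0 : Matrix N N ℝ) from diagonal_zero]
      rw [Matrix.mul_zero, Matrix.zero_mul]
    · intro h; rw [h, add_zero, det_one]

/-- If `P` is posdef and `Gᵀ P G = 0` then `G = 0`. -/
lemma congr_zero {p q : Type*} [Fintype p] [Fintype q] [DecidableEq q]
    {P : Matrix p p ℝ} (hP : P.PosDef) {G : Matrix p q ℝ}
    (h : Gᵀ * P * G = 0) : G = 0 := by
  have hv : ∀ v : q → ℝ, G *ᵥ v = 0 := by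
    intro v
    by_contra hvne
    have hpos := hP.dotProduct_mulVec_pos hvne
    have hzero : dotProduct (star (G *ᵥ v)) (P *ᵥ (G *ᵥ v)) = 0 := by
      rw [star_trivial, mulVec_mulVec, ← vecMul_transpose, ← dotProduct_mulVec,
        mulVec_mulVec, ← Matrix.mul_assoc, h, zero_mulVec, dotProduct_zero]
    rw [hzero] at hpos
    exact lt_irrefl _ hpos
  ext i j
  have := congrFun (hv (Pi.single j 1)) i
  simpa [mulVec, dotProduct, Pi.single_apply] using this

/-- Determinant grows when adding a Gram matrix to a posdef matrix. -/
lemma det_add_gram {p q : Type*} [Fintype p] [Fintype q] [DecidableEq p] [DecidableEq q]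
    {P : Matrix p p ℝ} (hP : P.PosDef) (W : Matrix q p ℝ) :
    P.det ≤ (P + Wᵀ * W).det ∧ ((P + Wᵀ * W).det = P.det ↔ W = 0) := by
  have hdetP : IsUnit P.det := hP.det_pos.ne'.isUnit
  have hsplit : P + Wᵀ * W = P * (1 + P⁻¹ * (Wᵀ * W)) := by
    rw [Matrix.mul_add, Matrix.mul_one, ← Matrix.mul_assoc, Matrix.mul_nonsing_inv _ hdetP,
      Matrix.one_mul]
  have hE : (W * P⁻¹ * Wᵀ).PosSemidef := by
    have := hP.inv.posSemidef.mul_mul_conjTranspose_same W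
    rwa [conjTranspose_eq_transpose_of_trivial] at this
  obtain ⟨h1, h2⟩ := det_one_add_psd hE
  have hdet : (P + Wᵀ * W).det = P.det * (1 + W * P⁻¹ * Wᵀ).det := by
    rw [hsplit, det_mul]
    congr 1
    rw [← Matrix.mul_assoc, det_one_add_mul_comm, Matrix.mul_assoc]
  constructor
  · rw [hdet]
    nlinarith [hP.det_pos]
  · rw [hdet]
    constructor
    · intro h
      have : (1 + W * P⁻¹ * Wᵀ).det = 1 := (mul_eq_left₀ hP.det_pos.ne').mp h
      have hEz : W * P⁻¹ * Wᵀ = 0 := h2.mp this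
      have : Wᵀᵀ * P⁻¹ * Wᵀ = 0 := by rwa [transpose_transpose]
      have := congr_zero hP.inv this
      rwa [transpose_eq_zero] at this
    · intro h
      rw [h]
      simp

lemma posdef_one_add_psd {p : Type*} [Fintype p] [DecidableEq p]
    {A : Matrix p p ℝ} (hA : A.PosSemidef) : (1 + A).PosDef :=
  Matrix.PosDef.one.add_posSemidef hA

lemma psd_gram {N p : Type*} [Fintype N] [Fintype p] (X : Matrix N p ℝ) :
    (X * Xᵀ).PosSemidef := by
  have := posSemidef_self_mul_conjTranspose X
  rwa [conjTranspose_eq_transpose_of_trivial] at this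

lemma psd_gram' {N p : Type*} [Fintype N] [Fintype p] (X : Matrix N p ℝ) :
    (Xᵀ * X).PosSemidef := by
  have := posSemidef_conjTranspose_mul_self X
  rwa [conjTranspose_eq_transpose_of_trivial] at this

open scoped MatrixOrder in
/-- Two-block Gram determinant inequality with equality condition. -/
lemma det_gram_two {N p q : Type*} [Fintype N] [DecidableEq N] [Fintype p] [DecidableEq p]
    [Fintype q] [DecidableEq q] (X : Matrix N p ℝ) (Y : Matrix N q ℝ) :
    (1 + (X * Xᵀ + Y * Yᵀ)).det ≤ (1 + X * Xᵀ).det * (1 + Y * Yᵀ).det ∧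
    ((1 + (X * Xᵀ + Y * Yᵀ)).det = (1 + X * Xᵀ).det * (1 + Y * Yᵀ).det ↔ Xᵀ * Y = 0) := by
  set S : Matrix N N ℝ := 1 + X * Xᵀ with hSdef
  set T : Matrix p p ℝ := 1 + Xᵀ * X with hTdef
  have hS : S.PosDef := posdef_one_add_psd (psd_gram X)
  have hT : T.PosDef := posdef_one_add_psd (psd_gram' X)
  have hSdet : IsUnit S.det := hS.det_pos.ne'.isUnit
  have hTdet : IsUnit T.det := hT.det_pos.ne'.isUnit
  -- determinant factorization
  have hfact : (1 + (X * Xᵀ + Y * Yᵀ)).det = S.det * (1 + Yᵀ * S⁻¹ * Y).det := by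
    have hsplit : 1 + (X * Xᵀ + Y * Yᵀ) = S * (1 + S⁻¹ * (Y * Yᵀ)) := by
      rw [Matrix.mul_add, Matrix.mul_one, ← Matrix.mul_assoc, Matrix.mul_nonsing_inv _ hSdet,
        Matrix.one_mul, hSdef, add_assoc]
    rw [hsplit, det_mul]
    congr 1
    rw [← Matrix.mul_assoc, det_one_add_mul_comm, Matrix.mul_assoc]
  -- push-through identity
  have hpush : X * T = S * X := by
    rw [hSdef, hTdef, Matrix.mul_add, Matrix.add_mul, Matrix.mul_one, Matrix.one_mul,
      Matrix.mul_assoc]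
  have hXT : X * T⁻¹ = S⁻¹ * X := by
    calc X * T⁻¹ = S⁻¹ * S * (X * T⁻¹) := by rw [Matrix.nonsing_inv_mul _ hSdet, Matrix.one_mul]
    _ = S⁻¹ * (X * T * T⁻¹) := by rw [Matrix.mul_assoc, ← Matrix.mul_assoc S X, ← hpush]
    _ = S⁻¹ * X := by rw [Matrix.mul_assoc, Matrix.mul_nonsing_inv _ hTdet, Matrix.mul_one]
  have hkey : S⁻¹ + X * T⁻¹ * Xᵀ = 1 := by
    have h1 : X * T⁻¹ * Xᵀ = S⁻¹ * (X * Xᵀ) := by rw [hXT, Matrix.mul_assoc]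
    rw [h1]
    nth_rewrite 1 [← Matrix.mul_one S⁻¹]
    rw [← Matrix.mul_add, ← hSdef, Matrix.nonsing_inv_mul _ hSdet]
  set G : Matrix p q ℝ := Xᵀ * Y with hGdef
  have hid2 : (1 + Yᵀ * S⁻¹ * Y) + Gᵀ * T⁻¹ * G = 1 + Yᵀ * Y := by
    have hGT : Gᵀ * T⁻¹ * G = Yᵀ * (X * T⁻¹ * Xᵀ) * Y := by
      rw [hGdef, transpose_mul, transpose_transpose]
      simp only [Matrix.mul_assoc]
    rw [hGT, add_assoc]
    congr 1
    have : Yᵀ * (S⁻¹ + X * T⁻¹ * Xᵀ) * Y = Yᵀ * Y := by rw [hkey, Matrix.mul_one]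
    rw [← this, Matrix.mul_add, Matrix.add_mul]
  -- Gram form of the correction term
  have hTinvPsd := hT.inv.posSemidef
  set R : Matrix p p ℝ := CFC.sqrt T⁻¹ with hRdef
  have hRsym : Rᵀ = R := by
    rw [← conjTranspose_eq_transpose_of_trivial]
    exact (CFC.sqrt_nonneg _).posSemidef.isHermitian
  set W : Matrix p q ℝ := R * G with hWdef
  have hWW : Wᵀ * W = Gᵀ * T⁻¹ * G := by
    rw [hWdef, transpose_mul, hRsym, Matrix.mul_assoc, ← Matrix.mul_assoc R,
      CFC.sqrt_mul_sqrt_self T⁻¹ hTinvPsd.nonneg, ← Matrix.mul_assoc]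
  -- posdef of the middle matrix
  have hEpsd : (Yᵀ * S⁻¹ * Y).PosSemidef := by
    have := hS.inv.posSemidef.conjTranspose_mul_mul_same Y
    rwa [conjTranspose_eq_transpose_of_trivial] at this
  have hP : (1 + Yᵀ * S⁻¹ * Y).PosDef := posdef_one_add_psd hEpsd
  obtain ⟨hle, heq⟩ := det_add_gram hP W
  rw [hWW, hid2] at hle heq
  have hYY : (1 + Yᵀ * Y).det = (1 + Y * Yᵀ).det := det_one_add_mul_comm Yᵀ Y
  have hWG : W = 0 ↔ G = 0 := by
    constructor
    · intro h
      have : Gᵀ * T⁻¹ * G = 0 := by rw [← hWW, h]; simp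
      exact congr_zero hT.inv this
    · intro h; rw [hWdef, h, Matrix.mul_zero]
  constructor
  · rw [hfact]
    calc S.det * (1 + Yᵀ * S⁻¹ * Y).det ≤ S.det * (1 + Yᵀ * Y).det := by
          exact mul_le_mul_of_nonneg_left hle hS.det_pos.le
    _ = S.det * (1 + Y * Yᵀ).det := by rw [hYY]
  · rw [hfact, ← hYY]
    constructor
    · intro h
      have h' : (1 + Yᵀ * S⁻¹ * Y).det = (1 + Yᵀ * Y).det :=
        mul_left_cancel₀ hS.det_pos.ne' h
      exact hWG.mp (heq.mp h'.symm)
    · intro h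
      rw [heq.mpr (hWG.mpr h)]

lemma det_gram_family {N : Type*} [Fintype N] [DecidableEq N] {κ : Type*} [DecidableEq κ]
    {p : κ → Type*} [∀ j, Fintype (p j)] [∀ j, DecidableEq (p j)]
    (Y : ∀ j, Matrix N (p j) ℝ) (s : Finset κ) :
    (1 + ∑ j ∈ s, Y j * (Y j)ᵀ).det ≤ ∏ j ∈ s, (1 + Y j * (Y j)ᵀ).det ∧
    ((1 + ∑ j ∈ s, Y j * (Y j)ᵀ).det = ∏ j ∈ s, (1 + Y j * (Y j)ᵀ).det ↔
      ∀ j₁ ∈ s, ∀ j₂ ∈ s, j₁ ≠ j₂ → (Y j₁)ᵀ * Y j₂ = 0) := by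
  classical
  induction s using Finset.induction_on with
  | empty => simp
  | @insert a s ha IH =>
    set C : Matrix N ((j : {x // x ∈ s}) × p j.1) ℝ := fun i jx => Y jx.1.1 i jx.2 with hCdef
    have hC : C * Cᵀ = ∑ j ∈ s, Y j * (Y j)ᵀ := by
      ext u v
      simp only [mul_apply, transpose_apply, Finset.sum_apply]
      simp only [hCdef]
      rw [← Finset.univ_sigma_univ, Finset.sum_sigma]
      rw [show (∑ j ∈ s, (Y j * (Y j)ᵀ)) u v = ∑ j ∈ s, ∑ x, Y j u x * Y j v x by
        rw [Matrix.sum_apply]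
        exact Finset.sum_congr rfl fun j _ => by simp [mul_apply, transpose_apply]]
      exact Finset.sum_coe_sort s (fun j => ∑ x, Y j u x * Y j v x)
    obtain ⟨h2le, h2eq⟩ := det_gram_two (Y a) C
    rw [hC] at h2le h2eq
    have hcross : (Y a)ᵀ * C = 0 ↔ ∀ j ∈ s, (Y a)ᵀ * Y j = 0 := by
      constructor
      · intro h j hj
        ext x y
        have := congrFun (congrFun h x) ⟨⟨j, hj⟩, y⟩
        simp only [mul_apply] at this
        simpa [mul_apply, transpose_apply, hCdef] using this
      · intro h
        ext x jy
        obtain ⟨⟨j, hj⟩, y⟩ := jy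
        have := congrFun (congrFun (h j hj) x) y
        rw [mul_apply]
        simpa [mul_apply, transpose_apply, hCdef] using this
    have hdpos : 0 < (1 + Y a * (Y a)ᵀ).det := (posdef_one_add_psd (psd_gram (Y a))).det_pos
    have htpos : 0 < (1 + ∑ j ∈ s, Y j * (Y j)ᵀ).det := by
      rw [← hC]; exact (posdef_one_add_psd (psd_gram C)).det_pos
    rw [Finset.sum_insert ha, Finset.prod_insert ha]
    set d := (1 + Y a * (Y a)ᵀ).det
    set t := (1 + ∑ j ∈ s, Y j * (Y j)ᵀ).det
    set r := ∏ j ∈ s, (1 + Y j * (Y j)ᵀ).det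
    have hdr : d * t ≤ d * r := mul_le_mul_of_nonneg_left IH.1 hdpos.le
    constructor
    · exact h2le.trans hdr
    · constructor
      · intro h
        have e1 : (1 + (Y a * (Y a)ᵀ + ∑ j ∈ s, Y j * (Y j)ᵀ)).det = d * t :=
          le_antisymm h2le (h ▸ hdr)
        have e2 : t = r := mul_left_cancel₀ hdpos.ne' (e1 ▸ h)
        have horthA : ∀ j ∈ s, (Y a)ᵀ * Y j = 0 := hcross.mp (h2eq.mp e1)
        have horthS := IH.2.mp e2
        intro j₁ hj₁ j₂ hj₂ hne
        rcases Finset.mem_insert.mp hj₁ with rfl | hj₁s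
        · rcases Finset.mem_insert.mp hj₂ with rfl | hj₂s
          · exact absurd rfl hne
          · exact horthA j₂ hj₂s
        · rcases Finset.mem_insert.mp hj₂ with rfl | hj₂s
          · have := horthA j₁ hj₁s
            have := congrArg Matrix.transpose this
            rwa [transpose_mul, transpose_transpose, transpose_zero] at this
          · exact horthS j₁ hj₁s j₂ hj₂s hne
      · intro h
        have e1 : (1 + (Y a * (Y a)ᵀ + ∑ j ∈ s, Y j * (Y j)ᵀ)).det = d * t :=
          h2eq.mpr (hcross.mpr fun j hj =>
            h a (Finset.mem_insert_self a s) j (Finset.mem_insert_of_mem hj)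
              (fun haj => ha (haj ▸ hj)))
        have e2 : t = r := IH.2.mpr fun j₁ hj₁ j₂ hj₂ hne =>
          h j₁ (Finset.mem_insert_of_mem hj₁) j₂ (Finset.mem_insert_of_mem hj₂) hne
        rw [e1, e2]

lemma smul_gram {N p : Type*} [Fintype N] [Fintype p] {c : ℝ} (hc : 0 ≤ c)
    (M : Matrix N p ℝ) :
    (Real.sqrt c • M) * (Real.sqrt c • M)ᵀ = c • (M * Mᵀ) := by
  rw [transpose_smul, Matrix.smul_mul, Matrix.mul_smul, smul_smul, Real.mul_self_sqrt hc]

lemma smul_transpose_mul_smul {N p q : Type*} [Fintype N] [Fintype p] [Fintype q] (a : ℝ)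
    (M : Matrix N p ℝ) (M' : Matrix N q ℝ) :
    (a • M)ᵀ * (a • M') = (a * a) • (Mᵀ * M') := by
  rw [transpose_smul, Matrix.smul_mul, Matrix.mul_smul, smul_smul]

lemma det_one_add_smul_gram_pos {N p : Type*} [Fintype N] [DecidableEq N] [Fintype p]
    {c : ℝ} (hc : 0 ≤ c) (M : Matrix N p ℝ) : 0 < (1 + c • (M * Mᵀ)).det := by
  rw [← smul_gram hc M]
  exact (posdef_one_add_psd (psd_gram _)).det_pos

theorem rate_reduction_upper_bound {n m k : ℕ} (Z : Matrix (Fin n) (Fin m) ℝ)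
    (π : Fin m → Fin k) (hmj : ∀ j, 0 < Fintype.card {i : Fin m // π i = j})
    (ε : ℝ) (hε : 0 < ε) :
    let mj : Fin k → ℕ := fun j => Fintype.card {i : Fin m // π i = j}
    let Zb : (j : Fin k) → Matrix (Fin n) {i : Fin m // π i = j} ℝ :=
      fun j => Z.submatrix id Subtype.val
    let ΔR : ℝ :=
      (1 / 2 : ℝ) * Real.log ((1 + ((n : ℝ) / (m * ε ^ 2)) • (Z * Zᵀ)).det) -
        ∑ j, ((mj j : ℝ) / (2 * m)) *
          Real.log ((1 + ((n : ℝ) / (mj j * ε ^ 2)) • (Zb j * (Zb j)ᵀ)).det)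
    let rhs : ℝ := ∑ j, (1 / (2 * (m : ℝ))) *
      Real.log (((1 + ((n : ℝ) / (m * ε ^ 2)) • (Zb j * (Zb j)ᵀ)).det ^ m) /
        ((1 + ((n : ℝ) / (mj j * ε ^ 2)) • (Zb j * (Zb j)ᵀ)).det ^ (mj j)))
    ΔR ≤ rhs ∧
    (ΔR = rhs ↔ ∀ j₁ j₂ : Fin k, j₁ ≠ j₂ → (Zb j₁)ᵀ * Zb j₂ = 0) := by
  intro mj Zb ΔR rhs
  simp only [ΔR, rhs, Zb, mj]
  clear ΔR rhs Zb mj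
  rcases Nat.eq_zero_or_pos k with hk | hk
  · -- k = 0 : no classes, so m = 0 as well
    subst hk
    haveI : IsEmpty (Fin m) := ⟨fun i => Fin.elim0 (π i)⟩
    have hZZ0 : Z * Zᵀ = 0 := by ext i j; simp [mul_apply]
    rw [hZZ0]
    simp
  rcases Nat.eq_zero_or_pos n with hn | hn
  · -- n = 0 : all determinants are trivially 1
    subst hn
    have hdet1 : ∀ (M : Matrix (Fin 0) (Fin 0) ℝ), M.det = 1 := fun M => det_fin_zero
    have hzero : ∀ j₁ j₂ : Fin k,
        (Z.submatrix id (Subtype.val : {i : Fin m // π i = j₁} → Fin m))ᵀ *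
          Z.submatrix id (Subtype.val : {i : Fin m // π i = j₂} → Fin m) = 0 := by
      intro j₁ j₂
      ext x y
      simp [mul_apply]
    simp [hdet1, hzero]
  -- main case
  have hm : 0 < m := by
    obtain ⟨⟨i, _⟩⟩ := Fintype.card_pos_iff.mp (hmj ⟨0, hk⟩)
    exact i.pos
  have hnR : (0 : ℝ) < n := by exact_mod_cast hn
  have hmR : (0 : ℝ) < m := by exact_mod_cast hm
  set c : ℝ := (n : ℝ) / (m * ε ^ 2) with hcdef
  have hc : 0 < c := div_pos hnR (by positivity)
  set B : (j : Fin k) → Matrix (Fin n) {i : Fin m // π i = j} ℝ :=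
    fun j => Z.submatrix id Subtype.val with hBdef
  set cj : Fin k → ℝ := fun j => (n : ℝ) / (Fintype.card {i : Fin m // π i = j} * ε ^ 2)
    with hcjdef
  have hcj : ∀ j, 0 < cj j := by
    intro j
    have : (0:ℝ) < Fintype.card {i : Fin m // π i = j} := by exact_mod_cast hmj j
    exact div_pos hnR (by positivity)
  set Rj : Fin k → ℝ := fun j => (1 + c • (B j * (B j)ᵀ)).det with hRjdef
  set Qj : Fin k → ℝ := fun j => (1 + cj j • (B j * (B j)ᵀ)).det with hQjdef
  set L : ℝ := (1 + c • (Z * Zᵀ)).det with hLdef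
  have hRpos : ∀ j, 0 < Rj j := fun j => det_one_add_smul_gram_pos hc.le (B j)
  have hQpos : ∀ j, 0 < Qj j := fun j => det_one_add_smul_gram_pos (hcj j).le (B j)
  have hLpos : 0 < L := det_one_add_smul_gram_pos hc.le Z
  -- the Gram decomposition of Z
  have hsumA : ∑ j, B j * (B j)ᵀ = Z * Zᵀ := by
    ext u v
    rw [Matrix.sum_apply]
    have hterm : ∀ j, (B j * (B j)ᵀ) u v = ∑ i : {i : Fin m // π i = j}, Z u i.1 * Z v i.1 := by
      intro j
      simp [hBdef, mul_apply, transpose_apply, submatrix_apply]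
    rw [Finset.sum_congr rfl fun j _ => hterm j,
      Fintype.sum_fiberwise π (fun i => Z u i * Z v i)]
    simp [mul_apply]
  -- apply the family Gram inequality to the scaled matrices
  have hgram : ∀ j, (Real.sqrt c • B j) * (Real.sqrt c • B j)ᵀ = c • (B j * (B j)ᵀ) :=
    fun j => smul_gram hc.le (B j)
  have hsum : ∑ j, (Real.sqrt c • B j) * (Real.sqrt c • B j)ᵀ = c • (Z * Zᵀ) := by
    rw [Finset.sum_congr rfl fun j _ => hgram j, ← Finset.smul_sum, hsumA]
  obtain ⟨kle, keq⟩ := det_gram_family (fun j => Real.sqrt c • B j) Finset.univ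
  rw [hsum] at kle keq
  rw [Finset.prod_congr rfl fun j _ => by rw [hgram j]] at kle keq
  have hcondiff : (∀ j₁ ∈ Finset.univ, ∀ j₂ ∈ Finset.univ, j₁ ≠ j₂ →
      (Real.sqrt c • B j₁)ᵀ * (Real.sqrt c • B j₂) = 0) ↔
      (∀ j₁ j₂ : Fin k, j₁ ≠ j₂ → (B j₁)ᵀ * B j₂ = 0) := by
    constructor
    · intro h j₁ j₂ hne
      have := h j₁ (Finset.mem_univ _) j₂ (Finset.mem_univ _) hne
      rw [smul_transpose_mul_smul, Real.mul_self_sqrt hc.le] at this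
      rcases smul_eq_zero.mp this with h' | h'
      · exact absurd h' hc.ne'
      · exact h'
    · intro h j₁ _ j₂ _ hne
      rw [smul_transpose_mul_smul, Real.mul_self_sqrt hc.le, h j₁ j₂ hne, smul_zero]
  rw [hcondiff] at keq
  -- positivity of the product
  have hprodpos : 0 < ∏ j, Rj j := Finset.prod_pos fun j _ => hRpos j
  -- rewrite the RHS sum
  have hmne : (m : ℝ) ≠ 0 := hmR.ne'
  have hrhs_eq : (∑ j, (1 / (2 * (m:ℝ))) * Real.log (Rj j ^ m / Qj j ^
        (Fintype.card {i : Fin m // π i = j}))) =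
      (∑ j, (1/2 : ℝ) * Real.log (Rj j)) -
        ∑ j, ((Fintype.card {i : Fin m // π i = j} : ℝ) / (2 * m)) * Real.log (Qj j) := by
    rw [← Finset.sum_sub_distrib]
    refine Finset.sum_congr rfl fun j _ => ?_
    rw [Real.log_div (pow_ne_zero _ (hRpos j).ne') (pow_ne_zero _ (hQpos j).ne'),
      Real.log_pow, Real.log_pow]
    field_simp
  -- final log manipulations
  have hlogprod : Real.log (∏ j, Rj j) = ∑ j, Real.log (Rj j) :=
    Real.log_prod fun j _ => (hRpos j).ne'
  have hhalf : (∑ j, (1/2 : ℝ) * Real.log (Rj j)) = (1/2) * Real.log (∏ j, Rj j) := by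
    rw [hlogprod, Finset.mul_sum]
  constructor
  · rw [hrhs_eq]
    apply sub_le_sub_right
    rw [hhalf]
    have hlog : Real.log L ≤ Real.log (∏ j, Rj j) :=
      (Real.log_le_log_iff hLpos hprodpos).mpr kle
    linarith
  · rw [hrhs_eq]
    constructor
    · intro h
      apply keq.mp
      have h4 : (1/2 : ℝ) * Real.log L = ∑ j, (1/2 : ℝ) * Real.log (Rj j) :=
        sub_left_inj.mp h
      rw [hhalf] at h4
      have h5 : Real.log L = Real.log (∏ j, Rj j) :=
        mul_left_cancel₀ (by norm_num : (1/2 : ℝ) ≠ 0) h4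
      have := congrArg Real.exp h5
      rwa [Real.exp_log hLpos, Real.exp_log hprodpos] at this
    · intro h
      have hLeq : L = ∏ j, Rj j := keq.mpr h
      have h4 : (1/2 : ℝ) * Real.log L = ∑ j, (1/2 : ℝ) * Real.log (Rj j) := by
        rw [hhalf, hLeq]
      exact sub_left_inj.mpr h4
end

section
/- Optimal rate reduction forces orthogonality: let Π = {Π^j}ⱼ be 0/1 diagonal membership matrices with Σⱼ Π^j = I, and suppose Z⋆ = [Z⋆^1, …, Z⋆^k] maximizes ΔR(Z, Π, ε) subject to ‖Z Π^j‖_F² = tr(Π^j) and rank(Z Π^j) ≤ d_j for each j. If n ≥ Σⱼ d_j, then (Z⋆^{j₁})ᵀ Z⋆^{j₂} = 0 for all 1 ≤ j₁ < j₂ ≤ k, i.e., the optimal representations of different classes lie in pairwise orthogonal subspaces. -/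
open Matrix
open scoped MatrixOrder

variable {N : ℕ}

lemma psd_trace_mul_nonneg {A B : Matrix (Fin N) (Fin N) ℝ}
    (hA : A.PosSemidef) (hB : B.PosSemidef) : 0 ≤ (A * B).trace := by
  have h1 : (A * B).trace = ((CFC.sqrt A) * B * (CFC.sqrt A)).trace := by
    conv_lhs => rw [← CFC.sqrt_mul_sqrt_self A hA.nonneg]
    rw [mul_assoc, trace_mul_comm]
  have h2 : ((CFC.sqrt A) * B * (CFC.sqrt A)).PosSemidef := by
    have := hB.conjTranspose_mul_mul_same (CFC.sqrt A)
    rwa [(CFC.sqrt_nonneg A).posSemidef.isHermitian.eq] at this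
  rw [h1, trace]
  refine Finset.sum_nonneg fun i _ => ?_
  have := h2.re_dotProduct_nonneg (Pi.single i 1)
  simpa [dotProduct, mulVec, Pi.single_apply, Finset.sum_ite_eq, diag] using this

lemma trace_transpose_mul_self_eq_zero {p q : ℕ} {X : Matrix (Fin p) (Fin q) ℝ}
    (h : (Xᴴ * X).trace = 0) : X = 0 := by
  have hnn : ∀ j : Fin q, 0 ≤ (Xᴴ * X) j j := fun j => by
    have : (Xᴴ * X) j j = dotProduct (star (fun i => X i j)) (fun i => X i j) := by
      simp [mul_apply, dotProduct, conjTranspose_apply]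
    rw [this]; exact Fintype.sum_nonneg fun i => mul_self_nonneg _
  have hdiag : ∀ j, (Xᴴ * X) j j = 0 := fun j =>
    (Finset.sum_eq_zero_iff_of_nonneg (fun i _ => hnn i)).mp h j (Finset.mem_univ j)
  ext i j
  have h1 : (Xᴴ * X) j j = dotProduct (star (fun i => X i j)) (fun i => X i j) := by
    simp [mul_apply, dotProduct, conjTranspose_apply]
  have h2 := dotProduct_star_self_eq_zero.mp (h1 ▸ hdiag j)
  simpa using congr_fun h2 i

lemma psd_trace_mul_eq_zero {A B : Matrix (Fin N) (Fin N) ℝ}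
    (hA : A.PosSemidef) (hB : B.PosSemidef) (h : (A * B).trace = 0) : A * B = 0 := by
  obtain ⟨S, hSh, hSS⟩ : ∃ S : Matrix (Fin N) (Fin N) ℝ, Sᴴ = S ∧ S * S = A :=
    ⟨(CFC.sqrt A), (CFC.sqrt_nonneg A).posSemidef.isHermitian.eq, CFC.sqrt_mul_sqrt_self A hA.nonneg⟩
  obtain ⟨T, hTh, hTT⟩ : ∃ T : Matrix (Fin N) (Fin N) ℝ, Tᴴ = T ∧ T * T = B :=
    ⟨(CFC.sqrt B), (CFC.sqrt_nonneg B).posSemidef.isHermitian.eq, CFC.sqrt_mul_sqrt_self B hB.nonneg⟩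
  set X := T * S with hX
  have hXH : Xᴴ * X = S * B * S := by
    rw [hX, conjTranspose_mul, hSh, hTh, mul_assoc, ← mul_assoc T, hTT, ← mul_assoc]
  have htr : (Xᴴ * X).trace = (A * B).trace := by
    rw [hXH, ← hSS, mul_assoc, trace_mul_comm, mul_assoc]
    exact (trace_mul_comm _ _).symm
  have hX0 : X = 0 := trace_transpose_mul_self_eq_zero (htr.trans h)
  have hBA : B * A = 0 := by
    have hE : B * A = T * X * S := by
      rw [hX, ← hSS, ← hTT]; noncomm_ring
    rw [hE, hX0, mul_zero, zero_mul]
  have hAt : Aᵀ = A := by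
    rw [← conjTranspose_eq_transpose_of_trivial]; exact hA.isHermitian.eq
  have hBt : Bᵀ = B := by
    rw [← conjTranspose_eq_transpose_of_trivial]; exact hB.isHermitian.eq
  have : (B * A)ᵀ = A * B := by rw [transpose_mul, hAt, hBt]
  rw [← this, hBA, transpose_zero]

lemma one_le_prod_real {ι : Type*} {s : Finset ι} {f : ι → ℝ} (h : ∀ i ∈ s, 1 ≤ f i) :
    1 ≤ ∏ i ∈ s, f i := by
  calc (1:ℝ) = ∏ _i ∈ s, (1:ℝ) := by simp
  _ ≤ _ := Finset.prod_le_prod (by intros; norm_num) h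

lemma det_one_add_hermitian {S : Matrix (Fin N) (Fin N) ℝ} (hH : S.IsHermitian) :
    (1 + S).det = ∏ i, (1 + hH.eigenvalues i) := by
  classical
  set U : Matrix (Fin N) (Fin N) ℝ := (hH.eigenvectorUnitary : Matrix (Fin N) (Fin N) ℝ) with hUdef
  have hU : U * star U = 1 := mem_unitaryGroup_iff.mp hH.eigenvectorUnitary.2
  set D : Matrix (Fin N) (Fin N) ℝ := 1 + diagonal (RCLike.ofReal ∘ hH.eigenvalues) with hDdef
  have hdecomp : 1 + S = U * D * star U := by
    rw [hDdef, mul_add, add_mul, mul_one, hU]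
    congr 1
    exact hH.spectral_theorem
  have h1 : U.det * (star U).det = 1 := by rw [← det_mul, hU, det_one]
  have hD : D = diagonal (fun i => 1 + hH.eigenvalues i) := by
    rw [hDdef, ← diagonal_one, diagonal_add]
    congr 1
  rw [hdecomp, det_mul, det_mul, hD, det_diagonal]
  linear_combination (∏ i, (1 + hH.eigenvalues i)) * h1

lemma det_one_add_psd_s10 {S : Matrix (Fin N) (Fin N) ℝ} (hS : S.PosSemidef) :
    1 ≤ (1 + S).det := by
  rw [det_one_add_hermitian hS.isHermitian]
  exact one_le_prod_real fun i _ => by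
    have h0 : (0:ℝ) ≤ hS.isHermitian.eigenvalues i := hS.eigenvalues_nonneg i; linarith

lemma det_one_add_psd_lt {S : Matrix (Fin N) (Fin N) ℝ} (hS : S.PosSemidef) (hne : S ≠ 0) :
    1 < (1 + S).det := by
  classical
  have hH := hS.isHermitian
  rw [det_one_add_hermitian hH]
  have hev : ∃ i, hH.eigenvalues i ≠ 0 := by
    by_contra hc
    push_neg at hc
    apply hne
    have hz : diagonal (RCLike.ofReal ∘ hH.eigenvalues) = (0 : Matrix (Fin N) (Fin N) ℝ) := by
      ext i j
      by_cases hij : i = j <;> simp [Matrix.diagonal_apply, hij, hc]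
    rw [hH.spectral_theorem, hz, map_zero]
  obtain ⟨i₀, hi₀⟩ := hev
  have hnn : (0:ℝ) ≤ hH.eigenvalues i₀ := hS.eigenvalues_nonneg i₀
  have hpos : 0 < hH.eigenvalues i₀ := lt_of_le_of_ne hnn (Ne.symm hi₀)
  calc (1:ℝ) < 1 + hH.eigenvalues i₀ := by linarith
  _ ≤ _ := by
    rw [← Finset.mul_prod_erase Finset.univ _ (Finset.mem_univ i₀)]
    nlinarith [one_le_prod_real (s := Finset.univ.erase i₀)
      (f := fun i => 1 + hH.eigenvalues i) (fun i _ => by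
        have h0 : (0:ℝ) ≤ hH.eigenvalues i := hS.eigenvalues_nonneg i
        show 1 ≤ 1 + hH.eigenvalues i
        linarith)]

lemma det_lt_det_add_psd {P R : Matrix (Fin N) (Fin N) ℝ}
    (hP : P.PosDef) (hR : R.PosSemidef) :
    P.det ≤ (P + R).det ∧ (R ≠ 0 → P.det < (P + R).det) := by
  have hPdet : IsUnit P.det := isUnit_iff_ne_zero.mpr hP.det_pos.ne'
  have hPinv : P * P⁻¹ = 1 := mul_nonsing_inv P hPdet
  have hfact : P + R = P * (1 + P⁻¹ * R) := by
    rw [mul_add, mul_one, ← mul_assoc, hPinv, one_mul]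
  set S := (CFC.sqrt R) * P⁻¹ * (CFC.sqrt R) with hSdef
  have hdet2 : (1 + P⁻¹ * R).det = (1 + S).det := by
    have h1 : (1 : Matrix (Fin N) (Fin N) ℝ) + P⁻¹ * R = 1 + (P⁻¹ * (CFC.sqrt R)) * (CFC.sqrt R) := by
      rw [mul_assoc, CFC.sqrt_mul_sqrt_self R hR.nonneg]
    rw [h1, det_one_add_mul_comm, hSdef, ← mul_assoc]
  have hSpsd : S.PosSemidef := by
    have := (hP.inv.posSemidef).conjTranspose_mul_mul_same (CFC.sqrt R)
    rwa [(CFC.sqrt_nonneg R).posSemidef.isHermitian.eq] at this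
  have hkey : (P + R).det = P.det * (1 + S).det := by
    rw [hfact, det_mul, hdet2]
  constructor
  · rw [hkey]
    nlinarith [det_one_add_psd_s10 hSpsd, hP.det_pos]
  · intro hRne
    have hSne : S ≠ 0 := by
      intro hS0
      apply hRne
      have htr : (P⁻¹ * R).trace = 0 := by
        have : S.trace = (P⁻¹ * R).trace := by
          rw [hSdef, mul_assoc, trace_mul_comm, mul_assoc, CFC.sqrt_mul_sqrt_self R hR.nonneg]
        rw [← this, hS0, trace_zero]
      have := psd_trace_mul_eq_zero hP.inv.posSemidef hR htr
      calc R = P * (P⁻¹ * R) := by rw [← mul_assoc, hPinv, one_mul]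
      _ = 0 := by rw [this, mul_zero]
    rw [hkey]
    nlinarith [det_one_add_psd_lt hSpsd hSne, hP.det_pos]

lemma det_one_add_add_le {A B : Matrix (Fin N) (Fin N) ℝ}
    (hA : A.PosSemidef) (hB : B.PosSemidef) :
    (1 + A + B).det ≤ (1 + A).det * (1 + B).det ∧
      (A * B ≠ 0 → (1 + A + B).det < (1 + A).det * (1 + B).det) := by
  have hPd : (1 + A).PosDef := Matrix.PosDef.one.add_posSemidef hA
  set P : Matrix (Fin N) (Fin N) ℝ := 1 + A with hPdef
  have hPdet : IsUnit P.det := isUnit_iff_ne_zero.mpr hPd.det_pos.ne'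
  have hPinv : P * P⁻¹ = 1 := mul_nonsing_inv P hPdet
  have hPinv' : P⁻¹ * P = 1 := nonsing_inv_mul P hPdet
  set Np := (CFC.sqrt B) * P⁻¹ * (CFC.sqrt B) with hNdef
  have hNpsd : Np.PosSemidef := by
    have := (hPd.inv.posSemidef).conjTranspose_mul_mul_same (CFC.sqrt B)
    rwa [(CFC.sqrt_nonneg B).posSemidef.isHermitian.eq] at this
  have hdet1 : (1 + A + B).det = P.det * (1 + Np).det := by
    have hfact : 1 + A + B = P * (1 + P⁻¹ * B) := by
      rw [mul_add, mul_one, ← mul_assoc, hPinv, one_mul, hPdef]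
    have h1 : (1 : Matrix (Fin N) (Fin N) ℝ) + P⁻¹ * B = 1 + (P⁻¹ * (CFC.sqrt B)) * (CFC.sqrt B) := by
      rw [mul_assoc, CFC.sqrt_mul_sqrt_self B hB.nonneg]
    rw [hfact, det_mul, h1, det_one_add_mul_comm, hNdef, ← mul_assoc]
  set C := P⁻¹ * A with hCdef
  have hCpsd : C.PosSemidef := by
    have hAA : (A + A * A).PosSemidef := by
      have h2 : (Aᴴ * A).PosSemidef := posSemidef_conjTranspose_mul_self A
      rw [hA.isHermitian.eq] at h2
      exact hA.add h2
    have hcong := hAA.conjTranspose_mul_mul_same (P⁻¹)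
    rw [hPd.inv.isHermitian.eq] at hcong
    have hid : P⁻¹ * (A + A * A) * P⁻¹ = C := by
      have h3 : A + A * A = A * P := by rw [hPdef, mul_add, mul_one]
      rw [h3, hCdef, show P⁻¹ * (A * P) * P⁻¹ = P⁻¹ * A * (P * P⁻¹) by noncomm_ring,
        hPinv, mul_one]
    rwa [hid] at hcong
  set T := (CFC.sqrt B) * C * (CFC.sqrt B) with hTdef
  have hTpsd : T.PosSemidef := by
    have := hCpsd.conjTranspose_mul_mul_same (CFC.sqrt B)
    rwa [(CFC.sqrt_nonneg B).posSemidef.isHermitian.eq] at this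
  have hBsplit : (1 : Matrix (Fin N) (Fin N) ℝ) + B = (1 + Np) + T := by
    have : Np + T = B := by
      rw [hNdef, hTdef, hCdef,
        show (CFC.sqrt B) * P⁻¹ * (CFC.sqrt B) + (CFC.sqrt B) * (P⁻¹ * A) * (CFC.sqrt B)
          = (CFC.sqrt B) * (P⁻¹ * (1 + A)) * (CFC.sqrt B) by noncomm_ring,
        ← hPdef, hPinv', mul_one, CFC.sqrt_mul_sqrt_self B hB.nonneg]
    rw [add_assoc, this]
  have hNd : (1 + Np).PosDef := Matrix.PosDef.one.add_posSemidef hNpsd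
  obtain ⟨hle, hlt⟩ := det_lt_det_add_psd hNd hTpsd
  constructor
  · rw [hdet1, hBsplit]
    exact mul_le_mul_of_nonneg_left hle hPd.det_pos.le
  · intro hAB
    have hTne : T ≠ 0 := by
      intro hT0
      apply hAB
      have htr : (C * B).trace = 0 := by
        have : T.trace = (C * B).trace := by
          rw [hTdef, mul_assoc, trace_mul_comm, mul_assoc, CFC.sqrt_mul_sqrt_self B hB.nonneg]
        rw [← this, hT0, trace_zero]
      have hCB := psd_trace_mul_eq_zero hCpsd hB htr
      calc A * B = P * (C * B) := by
            rw [hCdef, show P * (P⁻¹ * A * B) = (P * P⁻¹) * (A * B) by noncomm_ring,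
              hPinv, one_mul]
      _ = 0 := by rw [hCB, mul_zero]
    rw [hdet1, hBsplit]
    exact (mul_lt_mul_iff_right₀ hPd.det_pos).mpr (hlt hTne)

lemma psd_sum {ι : Type*} [DecidableEq ι] (A : ι → Matrix (Fin N) (Fin N) ℝ)
    (hA : ∀ j, (A j).PosSemidef) (s : Finset ι) : (∑ j ∈ s, A j).PosSemidef := by
  classical
  induction s using Finset.induction_on with
  | empty => simpa using Matrix.PosSemidef.zero
  | @insert a s' hns ih =>
    rw [Finset.sum_insert hns]
    exact (hA a).add ih

lemma det_one_add_sum_le {ι : Type*} [DecidableEq ι] (A : ι → Matrix (Fin N) (Fin N) ℝ)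
    (hA : ∀ j, (A j).PosSemidef) (s : Finset ι) :
    (1 + ∑ j ∈ s, A j).det ≤ ∏ j ∈ s, (1 + A j).det := by
  classical
  induction s using Finset.induction_on with
  | empty => simp
  | @insert a s' hns ih =>
    rw [Finset.sum_insert hns, Finset.prod_insert hns, ← add_assoc]
    calc (1 + A a + ∑ j ∈ s', A j).det
        ≤ (1 + A a).det * (1 + ∑ j ∈ s', A j).det :=
          (det_one_add_add_le (hA a) (psd_sum A hA s')).1
      _ ≤ (1 + A a).det * ∏ j ∈ s', (1 + A j).det := by
          have h1 : (0:ℝ) ≤ (1 + A a).det := le_trans zero_le_one (det_one_add_psd_s10 (hA a))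
          exact mul_le_mul_of_nonneg_left ih h1

lemma det_one_add_sum_lt {ι : Type*} [DecidableEq ι] [Fintype ι]
    (A : ι → Matrix (Fin N) (Fin N) ℝ)
    (hA : ∀ j, (A j).PosSemidef) {j₁ j₂ : ι} (hne : j₁ ≠ j₂)
    (hAB : A j₁ * A j₂ ≠ 0) :
    (1 + ∑ j, A j).det < ∏ j, (1 + A j).det := by
  classical
  have hj2 : j₂ ∈ Finset.univ.erase j₁ := Finset.mem_erase.mpr ⟨hne.symm, Finset.mem_univ _⟩
  have hsum : ∑ j, A j = A j₁ + ∑ j ∈ Finset.univ.erase j₁, A j :=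
    (Finset.add_sum_erase _ _ (Finset.mem_univ j₁)).symm
  have hprod : ∏ j, (1 + A j).det
      = (1 + A j₁).det * ∏ j ∈ Finset.univ.erase j₁, (1 + A j).det :=
    (Finset.mul_prod_erase _ _ (Finset.mem_univ j₁)).symm
  have hScross : A j₁ * ∑ j ∈ Finset.univ.erase j₁, A j ≠ 0 := by
    intro h0
    have htr12 : 0 < (A j₁ * A j₂).trace := by
      rcases lt_or_eq_of_le (psd_trace_mul_nonneg (hA j₁) (hA j₂)) with h | h
      · exact h
      · exact absurd (psd_trace_mul_eq_zero (hA j₁) (hA j₂) h.symm) hAB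
    have htr : (A j₁ * ∑ j ∈ Finset.univ.erase j₁, A j).trace
        = ∑ j ∈ Finset.univ.erase j₁, (A j₁ * A j).trace := by
      rw [Finset.mul_sum, trace_sum]
    have hge : (A j₁ * A j₂).trace ≤ (A j₁ * ∑ j ∈ Finset.univ.erase j₁, A j).trace := by
      rw [htr]
      exact Finset.single_le_sum (fun j _ => psd_trace_mul_nonneg (hA j₁) (hA j)) hj2
    rw [h0, trace_zero] at hge
    linarith
  rw [hsum, hprod, ← add_assoc]
  calc (1 + A j₁ + ∑ j ∈ Finset.univ.erase j₁, A j).det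
      < (1 + A j₁).det * (1 + ∑ j ∈ Finset.univ.erase j₁, A j).det :=
        (det_one_add_add_le (hA j₁) (psd_sum A hA _)).2 hScross
    _ ≤ (1 + A j₁).det * ∏ j ∈ Finset.univ.erase j₁, (1 + A j).det := by
        have h1 : (0:ℝ) ≤ (1 + A j₁).det := le_trans zero_le_one (det_one_add_psd_s10 (hA j₁))
        exact mul_le_mul_of_nonneg_left (det_one_add_sum_le A hA _) h1

lemma det_one_add_sum_orth {ι : Type*} [DecidableEq ι] (A : ι → Matrix (Fin N) (Fin N) ℝ)
    (horth : ∀ j l, j ≠ l → A j * A l = 0) (s : Finset ι) :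
    (1 + ∑ j ∈ s, A j).det = ∏ j ∈ s, (1 + A j).det := by
  classical
  induction s using Finset.induction_on with
  | empty => simp
  | @insert a s' hns ih =>
    rw [Finset.sum_insert hns, Finset.prod_insert hns, ← ih, ← det_mul]
    congr 1
    have hcross : A a * ∑ j ∈ s', A j = 0 := by
      rw [Finset.mul_sum]
      exact Finset.sum_eq_zero fun j hj => horth a j (fun h => hns (h ▸ hj))
    rw [mul_add, add_mul, add_mul, mul_one, mul_one, one_mul, hcross, add_zero, ← add_assoc]

lemma vecMulVec_transpose {p q : ℕ} (u : Fin p → ℝ) (v : Fin q → ℝ) :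
    (vecMulVec u v)ᵀ = vecMulVec v u := by
  ext i j; simp [vecMulVec_apply, mul_comm]

lemma vecMulVec_mul_vecMulVec {p q r : ℕ} (u : Fin p → ℝ) (v : Fin q → ℝ)
    (w : Fin q → ℝ) (x : Fin r → ℝ) :
    vecMulVec u v * vecMulVec w x = dotProduct v w • vecMulVec u x := by
  ext i j
  simp only [mul_apply, vecMulVec_apply, Matrix.smul_apply, smul_eq_mul, dotProduct,
    Finset.sum_mul, Finset.mul_sum]
  congr 1; funext t; ring

lemma dotProduct_single_single {p : ℕ} (i i' : Fin p) :
    dotProduct (Pi.single i (1:ℝ)) (Pi.single i' (1:ℝ)) = if i = i' then 1 else 0 := by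
  simp [dotProduct, Pi.single_apply, eq_comm]

open FiniteDimensional in
lemma exists_orthogonal_frames {n m k : ℕ} (W : Fin k → Matrix (Fin n) (Fin m) ℝ)
    (hr : ∑ j, (W j).rank ≤ n) :
    ∃ Q : Fin k → Matrix (Fin n) (Fin n) ℝ,
      (∀ j l, j ≠ l → (Q j)ᵀ * Q l = 0) ∧
      (∀ j, (Q j)ᵀ * Q j * W j = W j) := by
  classical
  let L : (Fin n → ℝ) ≃ₗ[ℝ] EuclideanSpace ℝ (Fin n) :=
    (WithLp.linearEquiv 2 ℝ (Fin n → ℝ)).symm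
  let V : Fin k → Submodule ℝ (EuclideanSpace ℝ (Fin n)) := fun j =>
    (Submodule.span ℝ (Set.range (W j)ᵀ)).map (L : (Fin n → ℝ) →ₗ[ℝ] EuclideanSpace ℝ (Fin n))
  let r : Fin k → ℕ := fun j => Module.finrank ℝ (V j)
  have hrank : ∀ j, r j = (W j).rank := by
    intro j
    rw [(W j).rank_eq_finrank_span_cols]
    exact LinearEquiv.finrank_map_eq L _
  have hcard : Fintype.card ((j : Fin k) × Fin (r j)) ≤ Fintype.card (Fin n) := by
    rw [Fintype.card_sigma, Fintype.card_fin]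
    calc ∑ j, Fintype.card (Fin (r j)) = ∑ j, (W j).rank := by
          simp only [Fintype.card_fin]; exact Finset.sum_congr rfl fun j _ => hrank j
    _ ≤ n := hr
  obtain ⟨emb⟩ := Function.Embedding.nonempty_of_card_le hcard
  let B : (j : Fin k) → OrthonormalBasis (Fin (r j)) ℝ (V j) := fun j =>
    stdOrthonormalBasis ℝ (V j)
  let v : (j : Fin k) → Fin (r j) → (Fin n → ℝ) := fun j a =>
    WithLp.equiv 2 (Fin n → ℝ) ((B j a : EuclideanSpace ℝ (Fin n)))
  have hdot : ∀ j (a b : Fin (r j)),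
      dotProduct (v j a) (v j b) = if a = b then (1:ℝ) else 0 := by
    intro j a b
    have horm := orthonormal_iff_ite.mp (B j).orthonormal a b
    have hinner : (inner ℝ ((B j a : EuclideanSpace ℝ (Fin n)))
        ((B j b : EuclideanSpace ℝ (Fin n))) : ℝ) = if a = b then (1:ℝ) else 0 := by
      rw [← horm]; rfl
    rw [← hinner, PiLp.inner_apply]
    simp [dotProduct, v]
    exact Finset.sum_congr rfl fun _ _ => mul_comm _ _
  let Q : Fin k → Matrix (Fin n) (Fin n) ℝ := fun j =>
    ∑ a, vecMulVec (Pi.single (emb ⟨j, a⟩) (1:ℝ)) (v j a)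
  have hQtQ : ∀ j l, (Q j)ᵀ * Q l
      = ∑ a : Fin (r j), ∑ b : Fin (r l),
        (if (⟨j, a⟩ : (t : Fin k) × Fin (r t)) = ⟨l, b⟩ then (1:ℝ) else 0)
          • vecMulVec (v j a) (v l b) := by
    intro j l
    rw [show (Q j)ᵀ = ∑ a, vecMulVec (v j a) (Pi.single (emb ⟨j, a⟩) (1:ℝ)) by
      rw [transpose_sum]; exact Finset.sum_congr rfl fun a _ => vecMulVec_transpose _ _]
    rw [Finset.sum_mul_sum]
    refine Finset.sum_congr rfl fun a _ => Finset.sum_congr rfl fun b _ => ?_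
    rw [_root_.vecMulVec_mul_vecMulVec, dotProduct_single_single]
    congr 1
    by_cases h : emb ⟨j, a⟩ = emb ⟨l, b⟩
    · simp [h, emb.injective h]
    · have : (⟨j, a⟩ : (t : Fin k) × Fin (r t)) ≠ ⟨l, b⟩ := fun hc => h (by rw [hc])
      simp [h, this]
  have hcross : ∀ j l, j ≠ l → (Q j)ᵀ * Q l = 0 := by
    intro j l hjl
    rw [hQtQ]
    refine Finset.sum_eq_zero fun a _ => Finset.sum_eq_zero fun b _ => ?_
    have : (⟨j, a⟩ : (t : Fin k) × Fin (r t)) ≠ ⟨l, b⟩ := by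
      intro hc; exact hjl (congrArg Sigma.fst hc)
    simp [this]
  have hproj : ∀ j, (Q j)ᵀ * Q j = ∑ a, vecMulVec (v j a) (v j a) := by
    intro j
    rw [hQtQ]
    refine Finset.sum_congr rfl fun a _ => ?_
    rw [Finset.sum_eq_single a]
    · simp
    · intro b _ hba
      have : (⟨j, a⟩ : (t : Fin k) × Fin (r t)) ≠ ⟨j, b⟩ := by
        intro hc
        exact hba (eq_of_heq (Sigma.mk.inj_iff.mp hc).2).symm
      simp [this]
    · intro h; exact absurd (Finset.mem_univ a) h
  refine ⟨Q, hcross, fun j => ?_⟩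
  rw [hproj]
  -- show (∑ a, vecMulVec (v j a) (v j a)) * W j = W j
  ext i c
  have hcol : (L ((W j)ᵀ c)) ∈ V j :=
    Submodule.mem_map_of_mem (Submodule.subset_span ⟨c, rfl⟩)
  have hsum := (B j).sum_repr ⟨L ((W j)ᵀ c), hcol⟩
  have hsum' : ∑ a, (B j).repr ⟨L ((W j)ᵀ c), hcol⟩ a • ((B j a : EuclideanSpace ℝ (Fin n)))
      = L ((W j)ᵀ c) := by
    have := congrArg (Submodule.subtype (V j)) hsum
    simpa [map_sum] using this
  have hrepr : ∀ a, (B j).repr ⟨L ((W j)ᵀ c), hcol⟩ a = dotProduct (v j a) ((W j)ᵀ c) := by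
    intro a
    rw [(B j).repr_apply_apply]
    have h1 : (inner ℝ (B j a) (⟨L ((W j)ᵀ c), hcol⟩ : V j) : ℝ)
        = (inner ℝ ((B j a : EuclideanSpace ℝ (Fin n))) (L ((W j)ᵀ c)) : ℝ) := rfl
    rw [h1, PiLp.inner_apply]
    simp [dotProduct, v, L]
    exact Finset.sum_congr rfl fun _ _ => mul_comm _ _
  have hfun : ∑ a, dotProduct (v j a) ((W j)ᵀ c) • (v j a) = (W j)ᵀ c := by
    have h2 := congrArg L.symm hsum'
    rw [map_sum, LinearEquiv.symm_apply_apply] at h2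
    calc ∑ a, dotProduct (v j a) ((W j)ᵀ c) • (v j a)
        = ∑ a, L.symm ((B j).repr ⟨L ((W j)ᵀ c), hcol⟩ a
            • ((B j a : EuclideanSpace ℝ (Fin n)))) := by
          refine Finset.sum_congr rfl fun a _ => ?_
          rw [LinearEquiv.map_smul, hrepr]
          rfl
      _ = (W j)ᵀ c := h2
  have hentry := congrFun hfun i
  simp only [Finset.sum_apply, Pi.smul_apply, smul_eq_mul, transpose_apply] at hentry
  rw [Matrix.sum_mul, Matrix.sum_apply, ← hentry]
  refine Finset.sum_congr rfl fun a _ => ?_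
  simp only [mul_apply, vecMulVec_apply, dotProduct, transpose_apply, Finset.sum_mul]
  refine Finset.sum_congr rfl fun t _ => by ring

lemma psd_smul_self_mul_transpose {p q : ℕ} {c : ℝ} (hc : 0 ≤ c) (V : Matrix (Fin p) (Fin q) ℝ) :
    (c • (V * Vᵀ)).PosSemidef := by
  have h : c • (V * Vᵀ) = (Real.sqrt c • V) * (Real.sqrt c • V)ᵀ := by
    rw [transpose_smul, Matrix.smul_mul, Matrix.mul_smul, smul_smul, Real.mul_self_sqrt hc]
  rw [h, ← conjTranspose_eq_transpose_of_trivial]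
  exact posSemidef_self_mul_conjTranspose _

lemma det_one_add_smul_gram {p q : ℕ} (c : ℝ) (V W₀ : Matrix (Fin p) (Fin q) ℝ)
    (h : Vᵀ * V = W₀ᵀ * W₀) :
    (1 + c • (V * Vᵀ)).det = (1 + c • (W₀ * W₀ᵀ)).det := by
  have h1 : ∀ X : Matrix (Fin p) (Fin q) ℝ,
      (1 + c • (X * Xᵀ)).det = (1 + c • (Xᵀ * X)).det := fun X => by
    rw [show c • (X * Xᵀ) = (c • X) * Xᵀ from (Matrix.smul_mul c X Xᵀ).symm, det_one_add_mul_comm,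
      Matrix.mul_smul]
  rw [h1 V, h, ← h1 W₀]

/-- The diagonal 0/1 membership matrix of class `j` for a column partition `π`. -/
noncomputable def memMat {m k : ℕ} (π : Fin m → Fin k) (j : Fin k) :
    Matrix (Fin m) (Fin m) ℝ :=
  Matrix.diagonal fun i => if π i = j then 1 else 0

/-- The rate reduction objective `ΔR(Z, Π, ε)`. -/
noncomputable def deltaR {n m k : ℕ} (π : Fin m → Fin k) (ε : ℝ)
    (Z : Matrix (Fin n) (Fin m) ℝ) : ℝ :=
  (1 / 2 : ℝ) * Real.log ((1 + ((n : ℝ) / (m * ε ^ 2)) • (Z * Zᵀ)).det) -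
    ∑ j, ((memMat π j).trace / (2 * m)) *
      Real.log ((1 + ((n : ℝ) / ((memMat π j).trace * ε ^ 2)) • (Z * memMat π j * Zᵀ)).det)

lemma memMat_transpose {m k : ℕ} (π : Fin m → Fin k) (j : Fin k) :
    (memMat π j)ᵀ = memMat π j := diagonal_transpose _

lemma memMat_mul {m k : ℕ} (π : Fin m → Fin k) (j l : Fin k) :
    memMat π j * memMat π l = if j = l then memMat π j else 0 := by
  unfold memMat
  rw [diagonal_mul_diagonal]
  by_cases hjl : j = l
  · subst hjl
    rw [if_pos rfl]
    apply congrArg Matrix.diagonal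
    funext i
    by_cases hi : π i = j <;> simp [hi]
  · rw [if_neg hjl, ← diagonal_zero]
    apply congrArg Matrix.diagonal
    funext i
    by_cases hi : π i = j
    · have h2 : π i ≠ l := fun hc => hjl (hi ▸ hc ▸ rfl)
      simp [hi, h2, hjl]
    · simp [hi]

lemma memMat_sum {m k : ℕ} (π : Fin m → Fin k) :
    ∑ j, memMat π j = (1 : Matrix (Fin m) (Fin m) ℝ) := by
  ext a b
  rw [Matrix.sum_apply]
  by_cases hab : a = b
  · subst hab
    simp [memMat, Matrix.diagonal_apply_eq, Matrix.one_apply_eq]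
  · simp [memMat, Matrix.diagonal_apply_ne _ hab, Matrix.one_apply_ne hab]

theorem optimal_rate_reduction_orthogonal {n m k : ℕ} (π : Fin m → Fin k)
    (d : Fin k → ℕ) (ε : ℝ) (hε : 0 < ε) (hn : (∑ j, d j) ≤ n)
    (Zs : Matrix (Fin n) (Fin m) ℝ)
    (hfeas₁ : ∀ j, ((Zs * memMat π j) * (Zs * memMat π j)ᵀ).trace = (memMat π j).trace)
    (hfeas₂ : ∀ j, (Zs * memMat π j).rank ≤ d j)
    (hopt : ∀ Z : Matrix (Fin n) (Fin m) ℝ,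
      (∀ j, ((Z * memMat π j) * (Z * memMat π j)ᵀ).trace = (memMat π j).trace) →
      (∀ j, (Z * memMat π j).rank ≤ d j) →
      deltaR π ε Z ≤ deltaR π ε Zs) :
    ∀ j₁ j₂ : Fin k, j₁ ≠ j₂ → (Zs * memMat π j₁)ᵀ * (Zs * memMat π j₂) = 0 := by
  intro j₁ j₂ hne12
  rcases Nat.eq_zero_or_pos n with hn0 | hnpos
  · subst hn0
    ext a b
    simp [mul_apply]
  rcases Nat.eq_zero_or_pos m with hm0 | hmpos
  · subst hm0
    ext a b
    exact a.elim0
  by_contra hcon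
  classical
  have hXY : ∀ (X Y : Matrix (Fin n) (Fin m) ℝ),
      (X * Xᵀ) * (Y * Yᵀ) = X * (Xᵀ * Y) * Yᵀ := by
    intro X Y
    rw [Matrix.mul_assoc X Xᵀ, ← Matrix.mul_assoc Xᵀ Y, ← Matrix.mul_assoc X]
  set W : Fin k → Matrix (Fin n) (Fin m) ℝ := fun j => Zs * memMat π j with hWdef
  have hrk : ∑ j, (W j).rank ≤ n :=
    le_trans (Finset.sum_le_sum fun j _ => hfeas₂ j) hn
  obtain ⟨Q, hQcross, hQproj⟩ := exists_orthogonal_frames W hrk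
  set Z' : Matrix (Fin n) (Fin m) ℝ := ∑ l, Q l * W l with hZ'def
  have hblock : ∀ l, Z' * memMat π l = Q l * W l := by
    intro l
    rw [hZ'def, Matrix.sum_mul]
    rw [Finset.sum_eq_single l]
    · rw [Matrix.mul_assoc]
      congr 1
      show (Zs * memMat π l) * memMat π l = Zs * memMat π l
      rw [Matrix.mul_assoc, memMat_mul, if_pos rfl]
    · intro t _ htl
      rw [Matrix.mul_assoc]
      have hz : (W t) * memMat π l = 0 := by
        show (Zs * memMat π t) * memMat π l = 0
        rw [Matrix.mul_assoc, memMat_mul, if_neg htl, Matrix.mul_zero]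
      rw [hz, Matrix.mul_zero]
    · intro h; exact absurd (Finset.mem_univ l) h
  have hGram : ∀ l, (Q l * W l)ᵀ * (Q l * W l) = (W l)ᵀ * W l := by
    intro l
    rw [transpose_mul, Matrix.mul_assoc, ← Matrix.mul_assoc ((Q l)ᵀ) (Q l) (W l), hQproj l]
  have hGramCross : ∀ t l, t ≠ l → (Q t * W t)ᵀ * (Q l * W l) = 0 := by
    intro t l htl
    rw [transpose_mul, Matrix.mul_assoc, ← Matrix.mul_assoc ((Q t)ᵀ) (Q l) (W l),
      hQcross t l htl, Matrix.zero_mul, Matrix.mul_zero]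
  have hfeas₁' : ∀ l, ((Z' * memMat π l) * (Z' * memMat π l)ᵀ).trace = (memMat π l).trace := by
    intro l
    rw [hblock l, trace_mul_comm, hGram l, trace_mul_comm]
    exact hfeas₁ l
  have hfeas₂' : ∀ l, (Z' * memMat π l).rank ≤ d l := by
    intro l
    rw [hblock l]
    exact le_trans (rank_mul_le_right _ _) (hfeas₂ l)
  have hsd : ∀ (Z : Matrix (Fin n) (Fin m) ℝ) (l : Fin k),
      Z * memMat π l * Zᵀ = (Z * memMat π l) * (Z * memMat π l)ᵀ := by
    intro Z l
    rw [transpose_mul, memMat_transpose, ← Matrix.mul_assoc (Z * memMat π l),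
      Matrix.mul_assoc Z (memMat π l) (memMat π l), memMat_mul, if_pos rfl]
  have hsecond : ∀ j : Fin k, ((1 : Matrix (Fin n) (Fin n) ℝ)
        + ((n : ℝ) / ((memMat π j).trace * ε ^ 2)) • (Z' * memMat π j * Z'ᵀ)).det
      = ((1 : Matrix (Fin n) (Fin n) ℝ)
        + ((n : ℝ) / ((memMat π j).trace * ε ^ 2)) • (Zs * memMat π j * Zsᵀ)).det := by
    intro j
    rw [hsd Z' j, hsd Zs j, hblock j]
    exact det_one_add_smul_gram _ _ _ (hGram j)
  set c : ℝ := (n : ℝ) / (m * ε ^ 2) with hcdef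
  have hc : 0 < c := div_pos (by exact_mod_cast hnpos)
    (mul_pos (by exact_mod_cast hmpos) (pow_pos hε 2))
  set A : Fin k → Matrix (Fin n) (Fin n) ℝ := fun l => c • (W l * (W l)ᵀ) with hAdef
  set A' : Fin k → Matrix (Fin n) (Fin n) ℝ := fun l => c • ((Q l * W l) * (Q l * W l)ᵀ)
    with hA'def
  have hApsd : ∀ l, (A l).PosSemidef := fun l => psd_smul_self_mul_transpose hc.le _
  have hA'psd : ∀ l, (A' l).PosSemidef := fun l => psd_smul_self_mul_transpose hc.le _
  have hsumZs : c • (Zs * Zsᵀ) = ∑ l, A l := by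
    have h1 : Zs * Zsᵀ = ∑ l, W l * (W l)ᵀ := by
      calc Zs * Zsᵀ = Zs * (1 : Matrix (Fin m) (Fin m) ℝ) * Zsᵀ := by rw [Matrix.mul_one]
      _ = ∑ l, Zs * memMat π l * Zsᵀ := by
          rw [← memMat_sum π, Matrix.mul_sum, Matrix.sum_mul]
      _ = ∑ l, W l * (W l)ᵀ := Finset.sum_congr rfl fun l _ => hsd Zs l
    rw [h1, Finset.smul_sum]
  have hsumZ' : c • (Z' * Z'ᵀ) = ∑ l, A' l := by
    have h1 : Z' * Z'ᵀ = ∑ l, (Q l * W l) * (Q l * W l)ᵀ := by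
      calc Z' * Z'ᵀ = Z' * (1 : Matrix (Fin m) (Fin m) ℝ) * Z'ᵀ := by rw [Matrix.mul_one]
      _ = ∑ l, Z' * memMat π l * Z'ᵀ := by
          rw [← memMat_sum π, Matrix.mul_sum, Matrix.sum_mul]
      _ = ∑ l, (Q l * W l) * (Q l * W l)ᵀ := Finset.sum_congr rfl fun l _ => by
          rw [hsd Z' l, hblock l]
    rw [h1, Finset.smul_sum]
  have horth : ∀ t l, t ≠ l → A' t * A' l = 0 := by
    intro t l htl
    show (c • ((Q t * W t) * (Q t * W t)ᵀ)) * (c • ((Q l * W l) * (Q l * W l)ᵀ)) = 0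
    rw [Matrix.smul_mul, Matrix.mul_smul, smul_smul, hXY, hGramCross t l htl,
      Matrix.mul_zero, Matrix.zero_mul, smul_zero]
  have hA12 : A j₁ * A j₂ ≠ 0 := by
    intro h0
    apply hcon
    have h1 : (c * c) • ((W j₁ * (W j₁)ᵀ) * (W j₂ * (W j₂)ᵀ)) = 0 := by
      calc (c * c) • ((W j₁ * (W j₁)ᵀ) * (W j₂ * (W j₂)ᵀ)) = A j₁ * A j₂ := by
            show _ = (c • (W j₁ * (W j₁)ᵀ)) * (c • (W j₂ * (W j₂)ᵀ))
            rw [Matrix.smul_mul, Matrix.mul_smul, smul_smul]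
      _ = 0 := h0
    have h2 : (W j₁ * (W j₁)ᵀ) * (W j₂ * (W j₂)ᵀ) = 0 := by
      rcases smul_eq_zero.mp h1 with h | h
      · exact absurd h (by positivity)
      · exact h
    have htr : ((((W j₁)ᵀ * W j₂)ᴴ) * ((W j₁)ᵀ * W j₂)).trace = 0 := by
      have e1 : (((W j₁)ᵀ * W j₂)ᴴ) * ((W j₁)ᵀ * W j₂)
          = ((W j₂)ᵀ * W j₁) * ((W j₁)ᵀ * W j₂) := by
        rw [conjTranspose_eq_transpose_of_trivial, transpose_mul, transpose_transpose]
      have e2 : ((W j₂)ᵀ * W j₁) * ((W j₁)ᵀ * W j₂)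
          = (W j₂)ᵀ * (W j₁ * ((W j₁)ᵀ * W j₂)) := by
        rw [Matrix.mul_assoc]
      rw [e1, e2, trace_mul_comm,
        show (W j₁ * ((W j₁)ᵀ * W j₂)) * (W j₂)ᵀ = (W j₁ * (W j₁)ᵀ) * (W j₂ * (W j₂)ᵀ) from
          (hXY (W j₁) (W j₂)).symm ▸ rfl, h2, trace_zero]
    exact trace_transpose_mul_self_eq_zero htr
  have hdetlt : (1 + c • (Zs * Zsᵀ)).det < (1 + c • (Z' * Z'ᵀ)).det := by
    rw [hsumZs, hsumZ']
    calc (1 + ∑ l, A l).det < ∏ l, (1 + A l).det :=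
          det_one_add_sum_lt A hApsd hne12 hA12
    _ = ∏ l, (1 + A' l).det := Finset.prod_congr rfl fun l _ =>
          (det_one_add_smul_gram c (Q l * W l) (W l) (hGram l)).symm
    _ = (1 + ∑ l, A' l).det := (det_one_add_sum_orth A' horth Finset.univ).symm
  have hpos1 : 0 < (1 + c • (Zs * Zsᵀ)).det := by
    rw [hsumZs]
    exact lt_of_lt_of_le one_pos (det_one_add_psd_s10 (psd_sum A hApsd Finset.univ))
  have hdelta : deltaR π ε Zs < deltaR π ε Z' := by
    unfold deltaR
    rw [← hcdef]
    have hss : (∑ j, ((memMat π j).trace / (2 * m)) * Real.log ((1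
          + ((n : ℝ) / ((memMat π j).trace * ε ^ 2)) • (Z' * memMat π j * Z'ᵀ)).det))
        = ∑ j, ((memMat π j).trace / (2 * m)) * Real.log ((1
          + ((n : ℝ) / ((memMat π j).trace * ε ^ 2)) • (Zs * memMat π j * Zsᵀ)).det) :=
      Finset.sum_congr rfl fun j _ => by rw [hsecond j]
    rw [hss]
    have hlog : Real.log ((1 + c • (Zs * Zsᵀ)).det) < Real.log ((1 + c • (Z' * Z'ᵀ)).det) :=
      Real.log_lt_log hpos1 hdetlt
    linarith
  have := hopt Z' hfeas₁' hfeas₂'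
  linarith
end
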